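/- arXiv:0910.1808 — 7 statements merged into one kernel-verified Lean document; each statement's English description precedes it below -/
import Mathlib

section
/- Whether an arbitrary graph on n vertices with m edges contains an induced building can be decided by the following procedure: for every vertex v and every edge xy with x,y ∈ N(v), the graph contains a building using triangle v,x,y if and only if in the graph obtained by deleting all neighbours of v other than x and y, deleting v itself, deleting all vertices of N(x) ∩ N(y), and deleting the edge xy, there is a path from x to y. (Correctness statement: G contains an induced building if and only if there exist such v and edge xy for which that reduced graph has an x–y path.) -/
open SimpleGraph

universe u

variable {V : Type u}

/-- The cycle on `ZMod k`. -/
def cyc (k : ℕ) : SimpleGraph (ZMod k) :=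
  SimpleGraph.fromRel (fun i j => j = i + 1)

/-- A building on `k` vertices: the cycle `0,1,...,k-1` together with the single
chord `{0,2}`, which forms a triangle with the cycle edges `01` and `12`. -/
def buildingGraph (k : ℕ) : SimpleGraph (ZMod k) :=
  SimpleGraph.fromRel (fun i j => j = i + 1 ∨ (i = 0 ∧ j = 2))

def HasBuilding (G : SimpleGraph V) : Prop :=
  ∃ k, 5 ≤ k ∧ Nonempty (buildingGraph k ↪g G)

def BuildingFree (G : SimpleGraph V) : Prop := ¬ HasBuilding G

/-- A hole is an induced cycle on at least five vertices. -/
def HasHole (G : SimpleGraph V) : Prop :=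
  ∃ k, 5 ≤ k ∧ Nonempty (cyc k ↪g G)

/-- Chordal: no induced cycle on four or more vertices. -/
def IsChordal (G : SimpleGraph V) : Prop :=
  ∀ k, 4 ≤ k → IsEmpty (cyc k ↪g G)

/-- The gem: the path `0-1-2-3` plus vertex `4` adjacent to all of `0,1,2,3`. -/
def gemGraph : SimpleGraph (Fin 5) :=
  SimpleGraph.fromRel (fun i j =>
    (i = 0 ∧ j = 1) ∨ (i = 1 ∧ j = 2) ∨ (i = 2 ∧ j = 3) ∨ i = 4)

/-- The bull: the path `0-1-2-3` plus the nose `4` adjacent exactly to `1` and `2`. -/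
def bullGraph : SimpleGraph (Fin 5) :=
  SimpleGraph.fromRel (fun i j =>
    (i = 0 ∧ j = 1) ∨ (i = 1 ∧ j = 2) ∨ (i = 2 ∧ j = 3) ∨ (i = 4 ∧ (j = 1 ∨ j = 2)))

/-- The path on four vertices. -/
def p4Graph : SimpleGraph (Fin 4) :=
  SimpleGraph.fromRel (fun i j => (i = 0 ∧ j = 1) ∨ (i = 1 ∧ j = 2) ∨ (i = 2 ∧ j = 3))

/-- The domino: 6-cycle `0-1-2-3-4-5-0` plus chord `{1,4}`. -/
def dominoGraph : SimpleGraph (Fin 6) :=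
  SimpleGraph.fromRel (fun i j =>
    (i = 0 ∧ j = 1) ∨ (i = 1 ∧ j = 2) ∨ (i = 2 ∧ j = 3) ∨ (i = 3 ∧ j = 4) ∨
    (i = 4 ∧ j = 5) ∨ (i = 5 ∧ j = 0) ∨ (i = 1 ∧ j = 4))

/-- The `k`-sun: clique of centers `inl i`, independent tips `inr d`,
with tip `inr d` adjacent exactly to centers `inl d` and `inl (d+1)`. -/
def sunGraph (k : ℕ) : SimpleGraph (ZMod k ⊕ ZMod k) :=
  SimpleGraph.fromRel (fun a b =>
    match a, b with
    | Sum.inl _, Sum.inl _ => True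
    | Sum.inl c, Sum.inr d => c = d ∨ c = d + 1
    | _, _ => False)

def HasSun (G : SimpleGraph V) : Prop :=
  ∃ k, 3 ≤ k ∧ Nonempty (sunGraph k ↪g G)

/-- Closed neighbourhood. -/
def closedNbhd (G : SimpleGraph V) (v : V) : Set V := insert v (G.neighborSet v)

/-- `u` `X`-dominates `v` : `N(v) ∩ X ⊆ N[u] ∩ X`. -/
def NDom (G : SimpleGraph V) (X : Set V) (u v : V) : Prop :=
  G.neighborSet v ∩ X ⊆ closedNbhd G u ∩ X

/-- An induced path in `G` (as a walk): it is a path and the only edges of `G`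
between vertices of the walk are the edges of the walk. -/
def IsInducedPathW (G : SimpleGraph V) {u v : V} (p : G.Walk u v) : Prop :=
  p.IsPath ∧ ∀ a ∈ p.support, ∀ b ∈ p.support, G.Adj a b → s(a, b) ∈ p.edges

/-- A sunflower in `G` with `k ≥ 3` center vertices `c i` and petals `P i`:
each petal is an induced path of length at least two joining consecutive centers,
distinct petals meet only at centers, and the whole configuration is an induced
subgraph of `G` (the only edges between sunflower vertices are petal edges and
edges between center vertices). -/
structure Sunflower (G : SimpleGraph V) (k : ℕ) where
  c : ZMod k → V
  P : ∀ i : ZMod k, G.Walk (c i) (c (i + 1))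
  hk : 3 ≤ k
  hinj : Function.Injective c
  hlen : ∀ i, 2 ≤ (P i).length
  hpath : ∀ i, (P i).IsPath
  hmeet : ∀ i j, i ≠ j → ∀ w, w ∈ (P i).support → w ∈ (P j).support →
    w = c i ∨ w = c (i + 1)
  hind : ∀ a b, (∃ i, a ∈ (P i).support) → (∃ j, b ∈ (P j).support) →
    G.Adj a b → ((∃ i, s(a, b) ∈ (P i).edges) ∨ ((∃ i, a = c i) ∧ ∃ j, b = c j))

/-- Closed neighbourhood of `v` within a set `s`. -/
def cN (G : SimpleGraph V) (s : Set V) (v : V) : Set V :=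
  {u | u ∈ s ∧ (u = v ∨ G.Adj v u)}

/-- `x` is simple in the subgraph of `G` induced by `s`: the closed neighbourhoods
(within `s`) of the neighbours of `x` in `s` form a chain under inclusion. -/
def IsSimpleIn (G : SimpleGraph V) (s : Set V) (x : V) : Prop :=
  ∀ y ∈ s, ∀ z ∈ s, G.Adj x y → G.Adj x z →
    cN G s y ⊆ cN G s z ∨ cN G s z ⊆ cN G s y

/-- The graph obtained from `G` by deleting all neighbours of `v` other than
`x` and `y`, deleting `v`, deleting all common neighbours of `x` and `y`,
and deleting the edge `xy`. -/
def reducedGraph (G : SimpleGraph V) (v x y : V) : SimpleGraph V where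
  Adj a b := G.Adj a b ∧ a ≠ v ∧ b ≠ v ∧
    (¬ G.Adj v a ∨ a = x ∨ a = y) ∧ (¬ G.Adj v b ∨ b = x ∨ b = y) ∧
    ¬ (G.Adj x a ∧ G.Adj y a) ∧ ¬ (G.Adj x b ∧ G.Adj y b) ∧
    ¬ (a = x ∧ b = y) ∧ ¬ (a = y ∧ b = x)
  symm := ⟨by
    rintro a b ⟨h1, h2, h3, h4, h5, h6, h7, h8, h9⟩
    exact ⟨h1.symm, h3, h2, h5, h4, h7, h6,
      fun hc => h9 ⟨hc.2, hc.1⟩, fun hc => h8 ⟨hc.2, hc.1⟩⟩⟩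
  loopless := ⟨fun a h => G.irrefl h.1⟩


section BuildingDetectionProof

private lemma exists_walk_to_getVert {G : SimpleGraph V} {u v : V} (q : G.Walk u v) (s : ℕ) :
    ∃ w : G.Walk u (q.getVert s), w.length ≤ s := by
  induction q generalizing s with
  | nil => exact ⟨SimpleGraph.Walk.nil, Nat.zero_le _⟩
  | cons h q ih =>
    cases s with
    | zero => exact ⟨SimpleGraph.Walk.nil, Nat.zero_le _⟩
    | succ n =>
      obtain ⟨w, hw⟩ := ih n
      exact ⟨SimpleGraph.Walk.cons h w, by simpa using Nat.succ_le_succ hw⟩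

private lemma exists_walk_from_getVert {G : SimpleGraph V} {u v : V} (q : G.Walk u v) (s : ℕ) :
    ∃ w : G.Walk (q.getVert s) v, w.length ≤ q.length - s := by
  induction q generalizing s with
  | nil => exact ⟨SimpleGraph.Walk.nil, Nat.zero_le _⟩
  | cons h q ih =>
    cases s with
    | zero => exact ⟨SimpleGraph.Walk.cons h q, le_of_eq rfl⟩
    | succ n =>
      obtain ⟨w, hw⟩ := ih n
      refine ⟨w, ?_⟩
      simp only [SimpleGraph.Walk.length_cons]
      show w.length ≤ q.length + 1 - (n + 1)
      omega

private lemma zmod_eq_iff_val {k : ℕ} [NeZero k] (a b : ZMod k) : a = b ↔ a.val = b.val :=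
  ⟨fun h => h ▸ rfl, fun h => ZMod.val_injective k h⟩

private lemma val_two' {k : ℕ} (hk : 2 < k) : (2 : ZMod k).val = 2 := by
  haveI : NeZero k := ⟨by omega⟩
  have : ((2 : ℕ) : ZMod k).val = 2 := ZMod.val_cast_of_lt hk
  simpa using this

private lemma eq_add_one_iff {k : ℕ} (hk : 2 < k) (a b : ZMod k) :
    b = a + 1 ↔ (b.val = a.val + 1 ∨ (a.val = k - 1 ∧ b.val = 0)) := by
  haveI : NeZero k := ⟨by omega⟩
  haveI : Fact (1 < k) := ⟨by omega⟩
  rw [zmod_eq_iff_val, ZMod.val_add, ZMod.val_one]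
  have ha := ZMod.val_lt a
  have hb := ZMod.val_lt b
  rcases Nat.lt_or_ge (a.val + 1) k with h | h
  · rw [Nat.mod_eq_of_lt h]; omega
  · have h' : a.val + 1 = k := by omega
    rw [h', Nat.mod_self]; omega

private lemma buildingGraph_adj_iff {k : ℕ} (hk : 5 ≤ k) (a b : ZMod k) :
    (buildingGraph k).Adj a b ↔ a.val ≠ b.val ∧
      (b.val = a.val + 1 ∨ a.val = b.val + 1 ∨
       (a.val = k - 1 ∧ b.val = 0) ∨ (b.val = k - 1 ∧ a.val = 0) ∨
       (a.val = 0 ∧ b.val = 2) ∨ (b.val = 0 ∧ a.val = 2)) := by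
  haveI : NeZero k := ⟨by omega⟩
  have h2 : (2 : ZMod k).val = 2 := val_two' (by omega)
  have e0 : ∀ c : ZMod k, c = 0 ↔ c.val = 0 := fun c => (ZMod.val_eq_zero c).symm
  have e2 : ∀ c : ZMod k, c = 2 ↔ c.val = 2 := fun c => by rw [zmod_eq_iff_val, h2]
  rw [buildingGraph, SimpleGraph.fromRel_adj, eq_add_one_iff (by omega) a b,
    eq_add_one_iff (by omega) b a, e0 a, e0 b, e2 a, e2 b]
  have hne := zmod_eq_iff_val a b
  tauto

private def bf {H : SimpleGraph V} (v : V) {yy xx : V} (q : H.Walk yy xx) :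
    ZMod (q.length + 2) → V :=
  fun i => if i.val = 1 then v else q.getVert ((i.val + q.length) % (q.length + 2))

end BuildingDetectionProof

/-- `G` contains an induced building if and only if for some vertex
`v` and some edge `xy` inside `N(v)` there is an `x`–`y` path in the reduced graph. -/
theorem building_detection (G : SimpleGraph V) :
    HasBuilding G ↔ ∃ v x y : V, G.Adj v x ∧ G.Adj v y ∧ G.Adj x y ∧
      (reducedGraph G v x y).Reachable x y := by
  constructor
  · rintro ⟨k, hk, ⟨f⟩⟩
    haveI : NeZero k := ⟨by omega⟩
    haveI : Fact (1 < k) := ⟨by omega⟩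
    have h0 : (0 : ZMod k).val = 0 := ZMod.val_zero
    have h1 : (1 : ZMod k).val = 1 := ZMod.val_one k
    have h2 : (2 : ZMod k).val = 2 := val_two' (by omega)
    have adj10 : (buildingGraph k).Adj 1 0 := by
      rw [buildingGraph_adj_iff hk, h1, h0]; omega
    have adj12 : (buildingGraph k).Adj 1 2 := by
      rw [buildingGraph_adj_iff hk, h1, h2]; omega
    have adj02 : (buildingGraph k).Adj 0 2 := by
      rw [buildingGraph_adj_iff hk, h0, h2]; omega
    have key : ∀ i j : ZMod k, (buildingGraph k).Adj i j → i.val ≠ 1 → j.val ≠ 1 →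
        ¬(i.val = 0 ∧ j.val = 2) → ¬(j.val = 0 ∧ i.val = 2) →
        (reducedGraph G (f 1) (f 0) (f 2)).Adj (f i) (f j) := by
      intro i j hij hi1 hj1 hc1 hc2
      have nbr1 : ∀ c : ZMod k, G.Adj (f 1) (f c) → c = 0 ∨ c = 2 := by
        intro c hc
        have hh := (buildingGraph_adj_iff hk 1 c).mp (f.map_rel_iff.mp hc)
        rw [h1] at hh
        have : c.val = 0 ∨ c.val = 2 := by omega
        rcases this with h | h
        · exact Or.inl (ZMod.val_injective k (by rw [h, h0]))
        · exact Or.inr (ZMod.val_injective k (by rw [h, h2]))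
      have nbr02 : ∀ c : ZMod k, c.val ≠ 1 → ¬(G.Adj (f 0) (f c) ∧ G.Adj (f 2) (f c)) := by
        rintro c hc ⟨h0c, h2c⟩
        have A := (buildingGraph_adj_iff hk 0 c).mp (f.map_rel_iff.mp h0c)
        have B := (buildingGraph_adj_iff hk 2 c).mp (f.map_rel_iff.mp h2c)
        rw [h0] at A; rw [h2] at B; omega
      refine ⟨f.map_rel_iff.mpr hij, f.injective.ne (fun h => hi1 (by rw [h, h1])),
        f.injective.ne (fun h => hj1 (by rw [h, h1])), ?_, ?_,
        nbr02 i hi1, nbr02 j hj1, ?_, ?_⟩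
      · by_cases h : G.Adj (f 1) (f i)
        · rcases nbr1 i h with h' | h' <;> rw [h'] <;> simp
        · exact Or.inl h
      · by_cases h : G.Adj (f 1) (f j)
        · rcases nbr1 j h with h' | h' <;> rw [h'] <;> simp
        · exact Or.inl h
      · rintro ⟨e1, e2⟩
        exact hc1 ⟨by rw [f.injective e1, h0], by rw [f.injective e2, h2]⟩
      · rintro ⟨e1, e2⟩
        exact hc2 ⟨by rw [f.injective e2, h0], by rw [f.injective e1, h2]⟩
    have reach : ∀ n : ℕ, 2 ≤ n → n ≤ k →
        (reducedGraph G (f 1) (f 0) (f 2)).Reachable (f ((n : ℕ) : ZMod k)) (f 2) := by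
      intro n
      induction n with
      | zero => omega
      | succ n ih =>
        intro hn2 hnk
        by_cases hn : n + 1 = 2
        · rw [hn]
          simp only [Nat.cast_ofNat]
          exact SimpleGraph.Reachable.refl _
        · have h2n : 2 ≤ n := by omega
          have hvn : ((n : ℕ) : ZMod k).val = n := ZMod.val_cast_of_lt (by omega)
          have step : (reducedGraph G (f 1) (f 0) (f 2)).Adj
              (f (((n + 1 : ℕ)) : ZMod k)) (f ((n : ℕ) : ZMod k)) := by
            by_cases hkk : n + 1 = k
            · have hv1 : (((n + 1 : ℕ)) : ZMod k).val = 0 := by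
                rw [hkk, ZMod.natCast_self, ZMod.val_zero]
              apply key
              · rw [buildingGraph_adj_iff hk, hv1, hvn]; omega
              · rw [hv1]; omega
              · rw [hvn]; omega
              · rw [hv1, hvn]; omega
              · rw [hv1, hvn]; omega
            · have hv1 : (((n + 1 : ℕ)) : ZMod k).val = n + 1 := ZMod.val_cast_of_lt (by omega)
              apply key
              · rw [buildingGraph_adj_iff hk, hv1, hvn]; omega
              · rw [hv1]; omega
              · rw [hvn]; omega
              · rw [hv1, hvn]; omega
              · rw [hv1, hvn]; omega
          exact step.reachable.trans (ih h2n (by omega))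
    have := reach k (by omega) le_rfl
    rw [ZMod.natCast_self] at this
    exact ⟨f 1, f 0, f 2, f.map_rel_iff.mpr adj10, f.map_rel_iff.mpr adj12,
      f.map_rel_iff.mpr adj02, this⟩
  · rintro ⟨v, x, y, hvx, hvy, hxy, hreach⟩
    obtain ⟨q, hq⟩ := hreach.symm.exists_walk_length_eq_dist
    have hmin : ∀ w : (reducedGraph G v x y).Walk y x, q.length ≤ w.length := by
      intro w; rw [hq]; exact dist_le w
    have hinj : ∀ s t, s ≤ q.length → t ≤ q.length → q.getVert s = q.getVert t → s = t := by
      have half : ∀ s t, s < t → t ≤ q.length → q.getVert s ≠ q.getVert t := by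
        intro s t hst ht heq
        obtain ⟨w1, hw1⟩ := exists_walk_to_getVert q s
        obtain ⟨w2, hw2⟩ := exists_walk_from_getVert q t
        have := hmin (w1.append (w2.copy heq.symm rfl))
        rw [SimpleGraph.Walk.length_append, SimpleGraph.Walk.length_copy] at this
        omega
      intro s t hs ht heq
      rcases lt_trichotomy s t with h | h | h
      · exact absurd heq (half s t h ht)
      · exact h
      · exact absurd heq.symm (half t s h hs)
    have hedge : ∀ s, s < q.length →
        (reducedGraph G v x y).Adj (q.getVert s) (q.getVert (s + 1)) :=
      fun s hs => q.adj_getVert_succ hs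
    have hL1 : 1 ≤ q.length := by
      by_contra h
      have h0 : q.length = 0 := by omega
      have h2 := q.getVert_length
      rw [h0] at h2
      exact hxy.ne' (q.getVert_zero.symm.trans h2)
    have hcond : ∀ s, s ≤ q.length → (q.getVert s ≠ v ∧
        (¬ G.Adj v (q.getVert s) ∨ q.getVert s = x ∨ q.getVert s = y) ∧
        ¬(G.Adj x (q.getVert s) ∧ G.Adj y (q.getVert s))) := by
      intro s hs
      rcases Nat.lt_or_ge s q.length with h | h
      · obtain ⟨-, c2, -, c4, -, c6, -, -, -⟩ := hedge s h
        exact ⟨c2, c4, c6⟩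
      · have hs' : q.length - 1 + 1 = s := by omega
        obtain ⟨-, -, c3, -, c5, -, c7, -, -⟩ := hedge (q.length - 1) (by omega)
        rw [hs'] at c3 c5 c7
        exact ⟨c3, c5, c7⟩
    have hL3 : 3 ≤ q.length := by
      by_contra h
      rcases (by omega : q.length = 1 ∨ q.length = 2) with h' | h'
      · obtain ⟨-, -, -, -, -, -, -, -, c9⟩ := hedge 0 (by omega)
        apply c9
        refine ⟨q.getVert_zero, ?_⟩
        have h2 := q.getVert_length
        rw [h'] at h2
        exact h2
      · obtain ⟨ha1, -, -, -, -, -, c7, -, -⟩ := hedge 0 (by omega)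
        obtain ⟨ha2, -⟩ := hedge 1 (by omega)
        apply c7
        constructor
        · have hx2 : q.getVert 2 = x := by
            have h2 := q.getVert_length
            rw [h'] at h2
            exact h2
          rw [hx2] at ha2
          exact ha2.symm
        · rw [q.getVert_zero] at ha1
          exact ha1
    have hadj : ∀ s t, s ≤ q.length → t ≤ q.length →
        (G.Adj (q.getVert s) (q.getVert t) ↔ (t = s + 1 ∨ s = t + 1 ∨
          (s = 0 ∧ t = q.length) ∨ (t = 0 ∧ s = q.length))) := by
      intro s t hs ht
      constructor
      · intro hG
        by_cases hc1 : q.getVert s = x ∧ q.getVert t = y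
        · have e1 : s = q.length := hinj s q.length hs le_rfl (by rw [hc1.1, q.getVert_length])
          have e2 : t = 0 := hinj t 0 ht (by omega) (by rw [hc1.2, q.getVert_zero])
          omega
        by_cases hc2 : q.getVert s = y ∧ q.getVert t = x
        · have e1 : s = 0 := hinj s 0 hs (by omega) (by rw [hc2.1, q.getVert_zero])
          have e2 : t = q.length := hinj t q.length ht le_rfl (by rw [hc2.2, q.getVert_length])
          omega
        have hst : s ≠ t := by
          rintro rfl
          exact hG.ne rfl
        have hRadj : (reducedGraph G v x y).Adj (q.getVert s) (q.getVert t) := by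
          obtain ⟨c1, c2, c3⟩ := hcond s hs
          obtain ⟨d1, d2, d3⟩ := hcond t ht
          exact ⟨hG, c1, d1, c2, d2, c3, d3, hc1, hc2⟩
        have shortcut : ∀ s' t', s' < t' → t' ≤ q.length →
            (reducedGraph G v x y).Adj (q.getVert s') (q.getVert t') → t' = s' + 1 := by
          intro s' t' hlt hle hA
          obtain ⟨w1, hw1⟩ := exists_walk_to_getVert q s'
          obtain ⟨w2, hw2⟩ := exists_walk_from_getVert q t'
          have := hmin (w1.append (SimpleGraph.Walk.cons hA w2))
          rw [SimpleGraph.Walk.length_append, SimpleGraph.Walk.length_cons] at this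
          omega
        rcases Nat.lt_or_ge s t with h | h
        · exact Or.inl (shortcut s t h ht hRadj)
        · have h' : t < s := by omega
          exact Or.inr (Or.inl (shortcut t s h' hs hRadj.symm))
      · intro h
        rcases h with h | h | h | h
        · subst h
          exact (hedge s (by omega)).1
        · subst h
          exact ((hedge t (by omega)).1).symm
        · rw [h.1, h.2, q.getVert_zero, q.getVert_length]
          exact hxy.symm
        · rw [h.1, h.2, q.getVert_zero, q.getVert_length]
          exact hxy
    haveI : NeZero (q.length + 2) := ⟨by omega⟩
    have hmod : ∀ m, m < q.length + 2 → m ≠ 1 →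
        (m + q.length) % (q.length + 2) = if m = 0 then q.length else m - 2 := by
      intro m hm hm1
      by_cases hm0 : m = 0
      · rw [if_pos hm0, hm0, Nat.zero_add, Nat.mod_eq_of_lt (by omega)]
      · rw [if_neg hm0]
        have e : m + q.length - (q.length + 2) = m - 2 := by omega
        rw [Nat.mod_eq_sub_mod (by omega), e, Nat.mod_eq_of_lt (by omega)]
    have hfinj : Function.Injective (bf v q) := by
      intro a b hab
      have hav := ZMod.val_lt a
      have hbv := ZMod.val_lt b
      simp only [bf] at hab
      by_cases ha1 : a.val = 1 <;> by_cases hb1 : b.val = 1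
      · exact ZMod.val_injective _ (by rw [ha1, hb1])
      · exfalso
        have hbb := hmod b.val hbv hb1
        have hble : (b.val + q.length) % (q.length + 2) ≤ q.length := by
          rw [hbb]; split <;> omega
        rw [if_pos ha1, if_neg hb1] at hab
        exact (hcond _ hble).1 hab.symm
      · exfalso
        have haa := hmod a.val hav ha1
        have hale : (a.val + q.length) % (q.length + 2) ≤ q.length := by
          rw [haa]; split <;> omega
        rw [if_neg ha1, if_pos hb1] at hab
        exact (hcond _ hale).1 hab
      · have haa := hmod a.val hav ha1
        have hbb := hmod b.val hbv hb1
        have hale : (a.val + q.length) % (q.length + 2) ≤ q.length := by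
          rw [haa]; split <;> omega
        have hble : (b.val + q.length) % (q.length + 2) ≤ q.length := by
          rw [hbb]; split <;> omega
        rw [if_neg ha1, if_neg hb1] at hab
        have hmeq := hinj _ _ hale hble hab
        rw [haa, hbb] at hmeq
        apply ZMod.val_injective
        split_ifs at hmeq <;> omega
    have key2 : ∀ a b : ZMod (q.length + 2), a.val = 1 → b.val ≠ 1 →
        (G.Adj (bf v q a) (bf v q b) ↔ (buildingGraph (q.length + 2)).Adj a b) := by
      intro a b ha hb
      have hbv := ZMod.val_lt b
      have hbb := hmod b.val hbv hb
      have hble : (b.val + q.length) % (q.length + 2) ≤ q.length := by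
        rw [hbb]; split <;> omega
      rw [buildingGraph_adj_iff (by omega), ha]
      simp only [bf, if_pos ha, if_neg hb]
      constructor
      · intro h
        obtain ⟨-, c2, -⟩ := hcond _ hble
        rcases c2 with c2 | c2 | c2
        · exact absurd h c2
        · have hM : (b.val + q.length) % (q.length + 2) = q.length :=
            hinj _ q.length hble le_rfl (by rw [c2, q.getVert_length])
          rw [hbb] at hM
          have hb0 : b.val = 0 := by split_ifs at hM <;> omega
          exact ⟨by omega, by omega⟩
        · have hM : (b.val + q.length) % (q.length + 2) = 0 :=
            hinj _ 0 hble (by omega) (by rw [c2, q.getVert_zero])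
          rw [hbb] at hM
          have hb2 : b.val = 2 := by split_ifs at hM <;> omega
          exact ⟨by omega, by omega⟩
      · rintro ⟨hne, hd⟩
        have : b.val = 2 ∨ b.val = 0 := by omega
        rcases this with h | h
        · have e : (b.val + q.length) % (q.length + 2) = 0 := by
            rw [hbb, if_neg (by omega)]; omega
          rw [e, q.getVert_zero]
          exact hvy
        · have e : (b.val + q.length) % (q.length + 2) = q.length := by
            rw [hbb, if_pos h]
          rw [e, q.getVert_length]
          exact hvx
    refine ⟨q.length + 2, by omega, ⟨⟨⟨bf v q, hfinj⟩, ?_⟩⟩⟩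
    intro a b
    show G.Adj (bf v q a) (bf v q b) ↔ (buildingGraph (q.length + 2)).Adj a b
    by_cases ha1 : a.val = 1 <;> by_cases hb1 : b.val = 1
    · have : a = b := ZMod.val_injective _ (by rw [ha1, hb1])
      subst this
      exact ⟨fun h => absurd rfl h.ne, fun h => absurd rfl h.ne⟩
    · exact key2 a b ha1 hb1
    · rw [G.adj_comm, (buildingGraph (q.length + 2)).adj_comm]
      exact key2 b a hb1 ha1
    · have hav := ZMod.val_lt a
      have hbv := ZMod.val_lt b
      have haa := hmod a.val hav ha1
      have hbb := hmod b.val hbv hb1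
      have hale : (a.val + q.length) % (q.length + 2) ≤ q.length := by
        rw [haa]; split <;> omega
      have hble : (b.val + q.length) % (q.length + 2) ≤ q.length := by
        rw [hbb]; split <;> omega
      simp only [bf, if_neg ha1, if_neg hb1]
      rw [hadj _ _ hale hble, buildingGraph_adj_iff (by omega), haa, hbb]
      split_ifs <;> omega
end

section
/- Let G be a building-free graph containing a sunflower with exactly 3 center vertices in which some petal has exactly two edges and its petal vertex is simplicial in the sunflower, and suppose the sunflower is vertex-minimal with these properties. Then this sunflower is a 3-sun. -/
open SimpleGraph

universe u

variable {V : Type u}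

variable {G : SimpleGraph V}

lemma getVert_mem_support' {u v : V} (p : G.Walk u v) {n : ℕ} (hn : n ≤ p.length) :
    p.getVert n ∈ p.support :=
  Walk.mem_support_iff_exists_getVert.2 ⟨n, rfl, hn⟩

lemma getVert_inj' {u v : V} {p : G.Walk u v} (hp : p.IsPath) :
    ∀ m ≤ p.length, ∀ n ≤ p.length, p.getVert m = p.getVert n → m = n := by
  induction p with
  | nil => intro m hm n hn _; simp at hm hn; omega
  | cons h q ih =>
    intro m hm n hn heq
    rw [Walk.isPath_def, Walk.support_cons, List.nodup_cons, ← Walk.isPath_def] at hp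
    obtain ⟨hnot, hq⟩ := hp
    match m, n with
    | 0, 0 => rfl
    | 0, n+1 =>
      exfalso; apply hnot
      rw [Walk.getVert_zero, Walk.getVert_cons_succ] at heq
      rw [heq]
      exact getVert_mem_support' q (by simpa using hn)
    | m+1, 0 =>
      exfalso; apply hnot
      rw [Walk.getVert_zero, Walk.getVert_cons_succ] at heq
      rw [← heq]
      exact getVert_mem_support' q (by simpa using hm)
    | m+1, n+1 =>
      rw [Walk.getVert_cons_succ, Walk.getVert_cons_succ] at heq
      have := ih hq m (by simpa using hm) n (by simpa using hn) heq
      omega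

lemma mem_edges_index {u v : V} {p : G.Walk u v} {e : Sym2 V} (he : e ∈ p.edges) :
    ∃ j < p.length, e = s(p.getVert j, p.getVert (j+1)) := by
  induction p with
  | nil => simp at he
  | cons h q ih =>
    rw [Walk.edges_cons, List.mem_cons] at he
    rcases he with he | he
    · exact ⟨0, by simp, by simpa [Walk.getVert_cons_succ] using he⟩
    · obtain ⟨j, hj, hje⟩ := ih he
      exact ⟨j+1, by simpa using Nat.succ_lt_succ hj, by simpa [Walk.getVert_cons_succ] using hje⟩

lemma getVert_edge_mem {u v : V} (p : G.Walk u v) {j : ℕ} (hj : j < p.length) :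
    s(p.getVert j, p.getVert (j+1)) ∈ p.edges := by
  induction p generalizing j with
  | nil => simp at hj
  | cons h q ih =>
    match j with
    | 0 => simp [Walk.getVert_cons_succ]
    | j+1 =>
      rw [Walk.getVert_cons_succ, Walk.getVert_cons_succ, Walk.edges_cons]
      exact List.mem_cons_of_mem _ (ih (by simpa using hj))

lemma path_edge_consec {u v : V} {p : G.Walk u v} (hp : p.IsPath) {m n : ℕ}
    (hm : m ≤ p.length) (hn : n ≤ p.length)
    (he : s(p.getVert m, p.getVert n) ∈ p.edges) : n = m + 1 ∨ m = n + 1 := by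
  obtain ⟨j, hj, hje⟩ := mem_edges_index he
  rw [Sym2.eq_iff] at hje
  rcases hje with ⟨h1, h2⟩ | ⟨h1, h2⟩
  · left
    have := getVert_inj' hp m hm j hj.le h1
    have := getVert_inj' hp n hn (j+1) hj h2
    omega
  · right
    have := getVert_inj' hp m hm (j+1) hj h1
    have := getVert_inj' hp n hn j hj.le h2
    omega

lemma hasBuilding_of_apex {u w d : V} (p : G.Walk u w)
    (hp : p.IsPath) (hlen : 3 ≤ p.length)
    (hd : d ∉ p.support)
    (hdu : G.Adj d u) (hdw : G.Adj d w) (huw : G.Adj u w)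
    (hdonly : ∀ x ∈ p.support, G.Adj d x → x = u ∨ x = w)
    (hclosed : ∀ a ∈ p.support, ∀ b ∈ p.support, G.Adj a b →
      s(a, b) ∈ p.edges ∨ s(a, b) = s(u, w)) :
    HasBuilding G := by
  classical
  set L := p.length with hL
  set k := L + 2 with hk
  set g : ℕ → V := fun n => if n = 0 then w else if n = 1 then d else p.getVert (n - 2) with hg
  have hg0 : g 0 = w := by simp [hg]
  have hg1 : g 1 = d := by simp [hg]
  have hg2 : ∀ n, 2 ≤ n → g n = p.getVert (n - 2) := by
    intro n hn; simp only [hg]; rw [if_neg (by omega), if_neg (by omega)]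
  have hwL : p.getVert L = w := p.getVert_length
  have hu0 : p.getVert 0 = u := p.getVert_zero
  have huw' : u ≠ w := fun h => by
    have := getVert_inj' hp 0 (by omega) L (le_refl _) (by rw [hu0, hwL, h])
    omega
  -- membership
  have hmem : ∀ n, 2 ≤ n → n < k → g n ∈ p.support := by
    intro n h2 hnk; rw [hg2 n h2]; exact getVert_mem_support' p (by omega)
  -- injectivity on [0,k)
  have ginj : ∀ m < k, ∀ n < k, g m = g n → m = n := by
    intro m hm n hn heq
    rcases Nat.lt_or_ge m 2 with h2m | h2m <;> rcases Nat.lt_or_ge n 2 with h2n | h2n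
    · have hws : w ∈ p.support := p.end_mem_support
      interval_cases m <;> interval_cases n
      · rfl
      · exact absurd ((show w = d by rw [← hg0, ← hg1]; exact heq) ▸ hws) hd
      · exact absurd ((show w = d by rw [← hg0, ← hg1]; exact heq.symm) ▸ hws) hd
      · rfl
    · exfalso
      rw [hg2 n h2n] at heq
      interval_cases m
      · rw [hg0] at heq
        have := getVert_inj' hp L (le_refl _) (n-2) (by omega) (hwL.trans heq)
        omega
      · rw [hg1] at heq; exact hd (heq ▸ getVert_mem_support' p (by omega))
    · exfalso
      rw [hg2 m h2m] at heq
      interval_cases n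
      · rw [hg0] at heq
        have := getVert_inj' hp L (le_refl _) (m-2) (by omega) (hwL.trans heq.symm)
        omega
      · rw [hg1] at heq; exact hd (heq ▸ (getVert_mem_support' p (by omega) : p.getVert (m-2) ∈ p.support))
    · rw [hg2 m h2m, hg2 n h2n] at heq
      have := getVert_inj' hp (m-2) (by omega) (n-2) (by omega) heq
      omega
  -- backward adjacency for consecutive indices
  have hb : ∀ m n, m < k → n < k → n = (m+1) % k → G.Adj (g m) (g n) := by
    intro m n hm hn hmn
    rcases Nat.lt_or_ge (m+1) k with hlt | hge
    · rw [Nat.mod_eq_of_lt hlt] at hmn; subst hmn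
      rcases Nat.lt_or_ge m 2 with h2 | h2
      · interval_cases m
        · rw [hg0, hg1]; exact hdw.symm
        · rw [hg1, hg2 2 (by omega)]; simpa [hu0] using hdu
      · rw [hg2 m h2, hg2 (m+1) (by omega)]
        have : m + 1 - 2 = (m - 2) + 1 := by omega
        rw [this]
        exact p.adj_getVert_succ (by omega)
    · have hmk : m = k - 1 := by omega
      have : (m+1) % k = 0 := by rw [show m + 1 = k by omega]; exact Nat.mod_self k
      rw [this] at hmn; subst hmn
      rw [hg0, hg2 m (by omega), hmk]
      have h1 : k - 1 - 2 = L - 1 := by omega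
      rw [h1]
      have := p.adj_getVert_succ (show L - 1 < L by omega)
      rwa [show L - 1 + 1 = L by omega, hwL] at this
  -- full adjacency characterization
  have hiff : ∀ m < k, ∀ n < k, G.Adj (g m) (g n) ↔
      (n = (m+1) % k ∨ m = (n+1) % k ∨ (m = 0 ∧ n = 2) ∨ (m = 2 ∧ n = 0)) := by
    intro m hm n hn
    constructor
    · intro hadj
      have hne : m ≠ n := fun h => G.irrefl (h ▸ hadj)
      rcases Nat.lt_or_ge m 2 with h2m | h2m <;> rcases Nat.lt_or_ge n 2 with h2n | h2n
      · interval_cases m <;> interval_cases n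
        · exact absurd rfl hne
        · left; rw [Nat.mod_eq_of_lt (by omega)]
        · right; left; rw [Nat.mod_eq_of_lt (by omega)]
        · exact absurd rfl hne
      · -- m ∈ {0,1}, n ≥ 2
        rw [hg2 n h2n] at hadj
        interval_cases m
        · rw [hg0] at hadj
          have hws : w ∈ p.support := p.end_mem_support
          rcases hclosed _ hws _ (getVert_mem_support' p (by omega)) hadj with he | hch
          · have h' := path_edge_consec hp (m := L) (n := n - 2) (le_refl _) (by omega) (by rwa [hwL])
            have hn' : n = k - 1 := by rcases h' with h | h <;> omega
            right; left
            rw [hn', show k - 1 + 1 = k from by omega, Nat.mod_self]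
          · rw [Sym2.eq_iff] at hch
            rcases hch with ⟨h1, _⟩ | ⟨_, h2⟩
            · exact absurd h1.symm huw'
            · have := getVert_inj' hp (n-2) (by omega) 0 (by omega) (h2.trans hu0.symm)
              right; right; left; exact ⟨rfl, by omega⟩
        · rw [hg1] at hadj
          rcases hdonly _ (getVert_mem_support' p (by omega)) hadj with hx | hx
          · have := getVert_inj' hp (n-2) (by omega) 0 (by omega) (hx.trans hu0.symm)
            left; rw [Nat.mod_eq_of_lt (by omega)]; omega
          · exfalso
            have := getVert_inj' hp (n-2) (by omega) L (le_refl _) (hx.trans hwL.symm)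
            omega
      · -- symmetric: m ≥ 2, n ∈ {0,1}
        rw [hg2 m h2m] at hadj
        interval_cases n
        · rw [hg0] at hadj
          rcases hclosed _ (getVert_mem_support' p (by omega)) _ (p.end_mem_support) hadj with he | hch
          · have h' := path_edge_consec hp (m := m - 2) (n := L) (by omega) (le_refl _) (by rwa [hwL])
            have hm' : m = k - 1 := by rcases h' with h | h <;> omega
            left
            rw [hm', show k - 1 + 1 = k from by omega, Nat.mod_self]
          · rw [Sym2.eq_iff] at hch
            rcases hch with ⟨h1, h2⟩ | ⟨h1, h2⟩
            · have := getVert_inj' hp (m-2) (by omega) 0 (by omega) (h1.trans hu0.symm)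
              right; right; right; exact ⟨by omega, rfl⟩
            · exact absurd h2.symm huw'
        · rw [hg1] at hadj
          rcases hdonly _ (getVert_mem_support' p (by omega)) hadj.symm with hx | hx
          · have := getVert_inj' hp (m-2) (by omega) 0 (by omega) (hx.trans hu0.symm)
            right; left; rw [Nat.mod_eq_of_lt (by omega)]; omega
          · exfalso
            have := getVert_inj' hp (m-2) (by omega) L (le_refl _) (hx.trans hwL.symm)
            omega
      · rw [hg2 m h2m, hg2 n h2n] at hadj
        rcases hclosed _ (getVert_mem_support' p (by omega)) _ (getVert_mem_support' p (by omega)) hadj with he | hch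
        · rcases path_edge_consec hp (m := m - 2) (n := n - 2) (by omega) (by omega) he with h | h
          · left; rw [Nat.mod_eq_of_lt (by omega)]; omega
          · right; left; rw [Nat.mod_eq_of_lt (by omega)]; omega
        · exfalso
          rw [Sym2.eq_iff] at hch
          rcases hch with ⟨h1, h2⟩ | ⟨h1, h2⟩
          · have := getVert_inj' hp (n-2) (by omega) L (le_refl _) (h2.trans hwL.symm)
            omega
          · have := getVert_inj' hp (m-2) (by omega) L (le_refl _) (h1.trans hwL.symm)
            omega
    · intro hr
      rcases hr with h | h | ⟨h1, h2⟩ | ⟨h1, h2⟩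
      · exact hb m n hm hn h
      · exact (hb n m hn hm h).symm
      · subst h1; subst h2; rw [hg0, hg2 2 (by omega)]; simpa [hu0] using huw.symm
      · subst h1; subst h2; rw [hg0, hg2 2 (by omega)]; simpa [hu0] using huw
  -- assemble the embedding
  haveI : NeZero k := ⟨by omega⟩
  haveI : Fact (1 < k) := ⟨by omega⟩
  have hval2 : (2 : ZMod k).val = 2 := by
    have : ((2:ℕ) : ZMod k).val = 2 % k := ZMod.val_natCast k 2
    rw [Nat.mod_eq_of_lt (by omega)] at this
    simpa using this
  have hsucc : ∀ a b : ZMod k, b = a + 1 ↔ b.val = (a.val + 1) % k := by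
    intro a b
    constructor
    · intro h; subst h; rw [ZMod.val_add, ZMod.val_one k]
    · intro h
      apply ZMod.val_injective
      rw [h, ZMod.val_add, ZMod.val_one k]
  refine ⟨k, by omega, ⟨⟨⟨fun a => g a.val, ?_⟩, ?_⟩⟩⟩
  · intro a b hab
    exact ZMod.val_injective k (ginj _ (ZMod.val_lt a) _ (ZMod.val_lt b) hab)
  · intro a b
    change G.Adj (g a.val) (g b.val) ↔ _
    rw [hiff _ (ZMod.val_lt a) _ (ZMod.val_lt b)]
    rw [buildingGraph, SimpleGraph.fromRel_adj]
    constructor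
    · intro h
      have hne : a ≠ b := by
        rintro rfl
        rcases h with h | h | ⟨h1, h2⟩ | ⟨h1, h2⟩
        · rcases Nat.lt_or_ge (a.val+1) k with hlt | hge
          · rw [Nat.mod_eq_of_lt hlt] at h; omega
          · have := ZMod.val_lt a; have : a.val = k - 1 := by omega
            rw [show a.val + 1 = k from by omega, Nat.mod_self] at h; omega
        · rcases Nat.lt_or_ge (a.val+1) k with hlt | hge
          · rw [Nat.mod_eq_of_lt hlt] at h; omega
          · have := ZMod.val_lt a; have : a.val = k - 1 := by omega
            rw [show a.val + 1 = k from by omega, Nat.mod_self] at h; omega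
        · omega
        · omega
      refine ⟨hne, ?_⟩
      rcases h with h | h | ⟨h1, h2⟩ | ⟨h1, h2⟩
      · left; left; exact (hsucc a b).2 h
      · right; left; exact (hsucc b a).2 h
      · left; right
        constructor
        · exact ZMod.val_injective k (by rw [h1, ZMod.val_zero])
        · exact ZMod.val_injective k (by rw [h2, hval2])
      · right; right
        constructor
        · exact ZMod.val_injective k (by rw [h2, ZMod.val_zero])
        · exact ZMod.val_injective k (by rw [h1, hval2])
    · rintro ⟨hne, h | h⟩
      · rcases h with h | ⟨h1, h2⟩
        · left; exact (hsucc a b).1 h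
        · right; right; left
          exact ⟨by rw [h1, ZMod.val_zero], by rw [h2, hval2]⟩
      · rcases h with h | ⟨h1, h2⟩
        · right; left; exact (hsucc b a).1 h
        · right; right; right
          exact ⟨by rw [h2, hval2], by rw [h1, ZMod.val_zero]⟩

/-- a vertex-minimal sunflower with exactly 3 centers in a building-free
graph, having a petal with exactly two edges whose petal vertex is simplicial in the
sunflower, is a 3-sun (its vertex set induces a 3-sun). -/
theorem minimal_sunflower_is_3sun (G : SimpleGraph V) (hBF : BuildingFree G)
    (S : Sunflower G 3) (i : ZMod 3)
    (h2 : (S.P i).length = 2) (hadj : G.Adj (S.c i) (S.c (i + 1)))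
    (hmin : ∀ (T : Sunflower G 3) (j : ZMod 3), (T.P j).length = 2 →
      G.Adj (T.c j) (T.c (j + 1)) →
      {v | ∃ a, v ∈ (S.P a).support}.ncard ≤ {v | ∃ a, v ∈ (T.P a).support}.ncard) :
    ∃ f : sunGraph 3 ↪g G, Set.range f = {v | ∃ a, v ∈ (S.P a).support} := by
  classical
  clear hmin
  obtain ⟨c, P, hk, hinj, hlenP, hpath, hmeet, hind⟩ := S
  simp only at h2 hadj ⊢
  -- ZMod 3 arithmetic helpers
  have hz1 : ∀ j : ZMod 3, j + 2 + 1 = j := by decide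
  have hz2 : ∀ j : ZMod 3, j ≠ j + 1 := by decide
  have hz2' : ∀ j : ZMod 3, j ≠ j + 2 := by decide
  have hz4 : ∀ j : ZMod 3, j + 1 + 1 = j + 2 := by decide
  have hz6 : ∀ a b : ZMod 3, a = b + 1 → b = a + 2 := by decide
  have henum : ∀ a j : ZMod 3, a = j ∨ a = j + 1 ∨ a = j + 2 := by decide
  have hpairs : ∀ a b : ZMod 3, a ≠ b → ∃ u : ZMod 3,
      (a = u ∧ b = u + 1) ∨ (b = u ∧ a = u + 1) := by decide
  -- intersections of consecutive petals
  have hint1 : ∀ a : ZMod 3, ∀ x, x ∈ (P a).support → x ∈ (P (a+1)).support → x = c (a+1) := by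
    intro a x hA hB
    have A := hmeet a (a+1) (hz2 a) x hA hB
    have B := hmeet (a+1) a (hz2 a).symm x hB hA
    rcases A with h | h
    · rcases B with h' | h'
      · exact absurd (hinj (h ▸ h')) (hz2 a)
      · rw [hz4 a] at h'
        exact absurd (hinj (h ▸ h')) (hz2' a)
    · exact h
  have hz7 : ∀ a b : ZMod 3, b = a + 2 → a = b + 1 := by decide
  have hint : ∀ a b : ZMod 3, a ≠ b → ∀ x, x ∈ (P a).support → x ∈ (P b).support →
      (b = a + 1 ∧ x = c (a+1)) ∨ (a = b + 1 ∧ x = c a) := by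
    intro a b hne x hA hB
    rcases henum b a with h | h | h
    · exact absurd h.symm hne
    · exact Or.inl ⟨h, hint1 a x hA (h ▸ hB)⟩
    · have hab : a = b + 1 := hz7 a b h
      exact Or.inr ⟨hab, by rw [hab]; exact hint1 b x hB (by rw [← hab]; exact hA)⟩
  -- centers lying on petals
  have hcsup : ∀ a j : ZMod 3, c j ∈ (P a).support → j = a ∨ j = a + 1 := by
    intro a j hmem
    by_cases hja : j = a
    · exact Or.inl hja
    · have := hint a j (Ne.symm hja) (c j) hmem ((P j).start_mem_support)
      rcases this with ⟨h1, _⟩ | ⟨_, h2⟩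
      · exact Or.inr h1
      · exact absurd (hinj h2) hja
  -- internal vertices are in a single petal and are not centers
  have hnotc : ∀ a : ZMod 3, ∀ x, x ∈ (P a).support → x ≠ c a → x ≠ c (a+1) →
      (∀ j, x ≠ c j) ∧ (∀ b, b ≠ a → x ∉ (P b).support) := by
    intro a x hx h1 h2
    have hb : ∀ b, b ≠ a → x ∉ (P b).support := by
      intro b hba hxb
      rcases hint a b (Ne.symm hba) x hx hxb with ⟨_, h⟩ | ⟨_, h⟩
      · exact h2 h
      · exact h1 h
    refine ⟨?_, hb⟩
    intro j hj
    rcases hcsup a j (hj ▸ hx) with h | h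
    · exact h1 (by rw [hj, h])
    · exact h2 (by rw [hj, h])
  -- the petal vertex of the short petal
  set d : V := (P i).getVert 1 with hdd
  have hd_mem : d ∈ (P i).support := getVert_mem_support' _ (by omega)
  have hgv0 : (P i).getVert 0 = c i := (P i).getVert_zero
  have hgv2 : (P i).getVert 2 = c (i+1) := by rw [← h2]; exact (P i).getVert_length
  have hd_ne0 : d ≠ c i := by
    intro h
    have := getVert_inj' (hpath i) 1 (by omega) 0 (by omega) (h.trans hgv0.symm)
    omega
  have hd_ne2 : d ≠ c (i+1) := by
    intro h
    have := getVert_inj' (hpath i) 1 (by omega) 2 (by omega) (h.trans hgv2.symm)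
    omega
  have hd_int := hnotc i d hd_mem hd_ne0 hd_ne2
  have hadj_cid : G.Adj (c i) d := by
    have := (P i).adj_getVert_succ (i := 0) (by omega)
    rwa [hgv0] at this
  have hadj_d1 : G.Adj d (c (i+1)) := by
    have := (P i).adj_getVert_succ (i := 1) (by omega)
    rwa [hgv2] at this
  have hPied : ∀ e ∈ (P i).edges, e = s(c i, d) ∨ e = s(d, c (i+1)) := by
    intro e he
    obtain ⟨j, hj, hje⟩ := mem_edges_index he
    rw [h2] at hj
    interval_cases j
    · rw [hgv0] at hje; exact Or.inl hje
    · rw [hgv2] at hje; exact Or.inr hje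
  -- neighbours of d among sunflower vertices
  have hdnb : ∀ x, (∃ a, x ∈ (P a).support) → G.Adj d x → x = c i ∨ x = c (i+1) := by
    intro x hx hadjx
    rcases hind d x ⟨i, hd_mem⟩ hx hadjx with ⟨j, hje⟩ | ⟨⟨j, hcj⟩, _⟩
    · have hdj : d ∈ (P j).support := (P j).fst_mem_support_of_mem_edges hje
      have hji : j = i := by
        by_contra hc
        exact hd_int.2 j hc hdj
      subst hji
      rcases hPied _ hje with h | h <;> rw [Sym2.eq_iff] at h
      · rcases h with ⟨h1, _⟩ | ⟨_, h2⟩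
        · exact absurd h1 hd_ne0
        · exact Or.inl h2
      · rcases h with ⟨_, h2⟩ | ⟨h1, _⟩
        · exact Or.inr h2
        · exact absurd h1 hd_ne2
    · exact absurd hcj (hd_int.1 j)
  -- transporting adjacency along Sym2 equalities
  have hadjtrans : ∀ x y a b : V, G.Adj x y → s(x, y) = s(a, b) → G.Adj a b := by
    intro x y a b hxy h
    rw [Sym2.eq_iff] at h
    rcases h with ⟨h1, h2⟩ | ⟨h1, h2⟩
    · rwa [h1, h2] at hxy
    · rw [h1, h2] at hxy; exact hxy.symm
  -- classification of center pairs
  have hcent2 : ∀ j1 j2 : ZMod 3, j1 ≠ j2 → s(c j1, c j2) = s(c i, c (i+1)) ∨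
      s(c j1, c j2) = s(c (i+1), c (i+2)) ∨ s(c j1, c j2) = s(c (i+2), c i) := by
    intro j1 j2 hne
    have key : ∀ i a b : ZMod 3, a ≠ b → (a = i ∧ b = i+1) ∨ (b = i ∧ a = i+1) ∨
        (a = i+1 ∧ b = i+2) ∨ (b = i+1 ∧ a = i+2) ∨ (a = i+2 ∧ b = i) ∨
        (b = i+2 ∧ a = i) := by decide
    rcases key i j1 j2 hne with ⟨h1, h2⟩ | ⟨h1, h2⟩ | ⟨h1, h2⟩ | ⟨h1, h2⟩ | ⟨h1, h2⟩ | ⟨h1, h2⟩ <;>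
      rw [h1, h2] <;> simp [Sym2.eq_swap]
  -- copies of the petals with normalized endpoints
  have hcz1 : c (i + 1 + 1) = c (i + 2) := congrArg c (hz4 i)
  have hcz2 : c (i + 2 + 1) = c i := congrArg c (hz1 i)
  set Q1 : G.Walk (c (i+1)) (c (i+2)) := (P (i+1)).copy rfl hcz1 with hQ1
  set Q2 : G.Walk (c (i+2)) (c i) := (P (i+2)).copy rfl hcz2 with hQ2
  have hQ1s : Q1.support = (P (i+1)).support := (P (i+1)).support_copy rfl hcz1
  have hQ2s : Q2.support = (P (i+2)).support := (P (i+2)).support_copy rfl hcz2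
  have hQ1e : Q1.edges = (P (i+1)).edges := (P (i+1)).edges_copy rfl hcz1
  have hQ2e : Q2.edges = (P (i+2)).edges := (P (i+2)).edges_copy rfl hcz2
  have hQ1l : Q1.length = (P (i+1)).length := (P (i+1)).length_copy rfl hcz1
  have hQ2l : Q2.length = (P (i+2)).length := (P (i+2)).length_copy rfl hcz2
  have hQ1p : Q1.IsPath := ((P (i+1)).isPath_copy rfl hcz1).2 (hpath (i+1))
  have hQ2p : Q2.IsPath := ((P (i+2)).isPath_copy rfl hcz2).2 (hpath (i+2))
  have hz8 : ∀ j : ZMod 3, j + 1 ≠ j + 2 := by decide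
  -- Application 1: at least one of the other two center pairs is adjacent
  have hor : G.Adj (c (i+1)) (c (i+2)) ∨ G.Adj (c i) (c (i+2)) := by
    by_contra hcon
    push_neg at hcon
    obtain ⟨hn1, hn2⟩ := hcon
    set q : G.Walk (c i) (c (i+1)) := Q2.reverse.append Q1.reverse with hq
    have hqs : ∀ x, x ∈ q.support ↔ x ∈ (P (i+2)).support ∨ x ∈ (P (i+1)).support := by
      intro x
      rw [hq, Walk.mem_support_append_iff, Walk.support_reverse, Walk.support_reverse,
        List.mem_reverse, List.mem_reverse, hQ1s, hQ2s]
    have hqe : ∀ e, e ∈ q.edges ↔ e ∈ (P (i+2)).edges ∨ e ∈ (P (i+1)).edges := by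
      intro e
      rw [hq, Walk.edges_append, List.mem_append, Walk.edges_reverse, Walk.edges_reverse,
        List.mem_reverse, List.mem_reverse, hQ1e, hQ2e]
    have hdq : d ∉ q.support := by
      intro hds
      rcases (hqs d).1 hds with h | h
      · exact hd_int.2 (i+2) (Ne.symm (hz2' i)) h
      · exact hd_int.2 (i+1) (Ne.symm (hz2 i)) h
    refine hBF (hasBuilding_of_apex q ?_ ?_ hdq hadj_cid.symm hadj_d1 hadj ?_ ?_)
    · rw [Walk.isPath_def, hq, Walk.support_append, List.nodup_append]
      refine ⟨(hQ2p.reverse).support_nodup, (hQ1p.reverse).support_nodup.sublist (List.tail_sublist _), ?_⟩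
      intro x hx1 y hx2 hxy
      subst hxy
      have hx1' : x ∈ (P (i+2)).support := by
        rw [Walk.support_reverse, List.mem_reverse, hQ2s] at hx1; exact hx1
      have hx2' : x ∈ (P (i+1)).support := by
        have := List.mem_of_mem_tail hx2
        rwa [Walk.support_reverse, List.mem_reverse, hQ1s] at this
      have hx : x = c (i+2) := by
        have := hint1 (i+1) x hx2' (by rw [hz4 i]; exact hx1')
        rwa [hcz1] at this
      have hhead : Q1.reverse.support = c (i+2) :: Q1.reverse.support.tail :=
        Walk.support_eq_cons _
      have hnd := (hQ1p.reverse).support_nodup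
      rw [hhead, List.nodup_cons] at hnd
      exact hnd.1 (hx ▸ hx2)
    · have l1 := hlenP (i+1); have l2 := hlenP (i+2)
      rw [hq, Walk.length_append, Walk.length_reverse, Walk.length_reverse, hQ1l, hQ2l]
      omega
    · intro x hx hadjx
      rcases (hqs x).1 hx with h | h
      · exact hdnb x ⟨_, h⟩ hadjx
      · exact hdnb x ⟨_, h⟩ hadjx
    · intro x hx y hy hxy
      have hxs : ∃ a, x ∈ (P a).support := by
        rcases (hqs x).1 hx with h | h
        exacts [⟨_, h⟩, ⟨_, h⟩]
      have hys : ∃ a, y ∈ (P a).support := by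
        rcases (hqs y).1 hy with h | h
        exacts [⟨_, h⟩, ⟨_, h⟩]
      rcases hind x y hxs hys hxy with ⟨j, hje⟩ | ⟨⟨j1, hj1⟩, ⟨j2, hj2⟩⟩
      · rcases henum j i with rfl | rfl | rfl
        · exfalso
          have hdxy : x = d ∨ y = d := by
            rcases hPied _ hje with h | h <;> rw [Sym2.eq_iff] at h <;>
              rcases h with ⟨h1, h2⟩ | ⟨h1, h2⟩
            exacts [Or.inr h2, Or.inl h1, Or.inl h1, Or.inr h2]
          rcases hdxy with h | h
          · exact hdq (h ▸ hx)
          · exact hdq (h ▸ hy)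
        · exact Or.inl ((hqe _).2 (Or.inr hje))
        · exact Or.inl ((hqe _).2 (Or.inl hje))
      · subst hj1; subst hj2
        have hne12 : j1 ≠ j2 := fun h => hxy.ne (by rw [h])
        rcases hcent2 j1 j2 hne12 with h | h | h
        · exact Or.inr h
        · exact absurd (hadjtrans _ _ _ _ hxy h) hn1
        · exact absurd (hadjtrans _ _ _ _ hxy h).symm hn2
  -- Application 2
  have h02of12 : G.Adj (c (i+1)) (c (i+2)) → G.Adj (c i) (c (i+2)) := by
    intro h12
    by_contra hn02
    set q : G.Walk (c i) (c (i+1)) := Q2.reverse.append (Walk.cons h12.symm Walk.nil) with hq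
    have hqs : ∀ x, x ∈ q.support ↔ x ∈ (P (i+2)).support ∨ x = c (i+1) := by
      intro x
      rw [hq, Walk.mem_support_append_iff, Walk.support_reverse, List.mem_reverse, hQ2s]
      simp only [Walk.support_cons, Walk.support_nil, List.mem_cons,
        List.mem_singleton, List.not_mem_nil, or_false]
      constructor
      · rintro (h | h | h)
        · exact Or.inl h
        · exact Or.inl (by rw [h]; exact (P (i+2)).start_mem_support)
        · exact Or.inr h
      · rintro (h | h)
        · exact Or.inl h
        · exact Or.inr (Or.inr h)
    have hqe : ∀ e, e ∈ q.edges ↔ e ∈ (P (i+2)).edges ∨ e = s(c (i+2), c (i+1)) := by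
      intro e
      rw [hq, Walk.edges_append, List.mem_append, Walk.edges_reverse, List.mem_reverse, hQ2e]
      simp [Walk.edges_cons]
    have hc1notin : c (i+1) ∉ (P (i+2)).support := by
      intro h
      rcases hcsup _ _ h with h' | h'
      · exact hz8 i h'
      · rw [hz1 i] at h'
        exact hz2 i h'.symm
    have hdq : d ∉ q.support := by
      intro hds
      rcases (hqs d).1 hds with h | h
      · exact hd_int.2 (i+2) (Ne.symm (hz2' i)) h
      · exact hd_ne2 h
    refine hBF (hasBuilding_of_apex q ?_ ?_ hdq hadj_cid.symm hadj_d1 hadj ?_ ?_)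
    · rw [Walk.isPath_def, hq, Walk.support_append, List.nodup_append]
      refine ⟨(hQ2p.reverse).support_nodup, ?_, ?_⟩
      · simp [Walk.support_cons]
      · intro x hx1 y hx2 hxy
        subst hxy
        simp only [Walk.support_cons, Walk.support_nil, List.tail_cons, List.mem_singleton] at hx2
        rw [Walk.support_reverse, List.mem_reverse, hQ2s] at hx1
        rw [hx2] at hx1
        exact hc1notin hx1
    · have l2 := hlenP (i+2)
      rw [hq, Walk.length_append, Walk.length_reverse, hQ2l]
      simp only [Walk.length_cons, Walk.length_nil]
      omega
    · intro x hx hadjx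
      rcases (hqs x).1 hx with h | h
      · exact hdnb x ⟨_, h⟩ hadjx
      · exact Or.inr h
    · intro x hx y hy hxy
      have hxs : ∃ a, x ∈ (P a).support := by
        rcases (hqs x).1 hx with h | h
        · exact ⟨_, h⟩
        · exact ⟨i+1, by rw [h]; exact (P (i+1)).start_mem_support⟩
      have hys : ∃ a, y ∈ (P a).support := by
        rcases (hqs y).1 hy with h | h
        · exact ⟨_, h⟩
        · exact ⟨i+1, by rw [h]; exact (P (i+1)).start_mem_support⟩
      rcases hind x y hxs hys hxy with ⟨j, hje⟩ | ⟨⟨j1, hj1⟩, ⟨j2, hj2⟩⟩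
      · rcases henum j i with rfl | rfl | rfl
        · exfalso
          have hdxy : x = d ∨ y = d := by
            rcases hPied _ hje with h | h <;> rw [Sym2.eq_iff] at h <;>
              rcases h with ⟨h1, h2⟩ | ⟨h1, h2⟩
            exacts [Or.inr h2, Or.inl h1, Or.inl h1, Or.inr h2]
          rcases hdxy with h | h
          · exact hdq (h ▸ hx)
          · exact hdq (h ▸ hy)
        · -- j = i+1 : both endpoints lie in {c (i+1), c (i+2)}
          have hmx : x = c (i+1) ∨ x = c (i+2) := by
            rcases (hqs x).1 hx with h | h
            · refine Or.inr ?_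
              have := hint1 (i+1) x ((P (i+1)).fst_mem_support_of_mem_edges hje)
                (by rw [hz4 i]; exact h)
              rwa [hcz1] at this
            · exact Or.inl h
          have hmy : y = c (i+1) ∨ y = c (i+2) := by
            rcases (hqs y).1 hy with h | h
            · refine Or.inr ?_
              have := hint1 (i+1) y ((P (i+1)).snd_mem_support_of_mem_edges hje)
                (by rw [hz4 i]; exact h)
              rwa [hcz1] at this
            · exact Or.inl h
          have hxy' : s(x, y) = s(c (i+2), c (i+1)) := by
            rcases hmx with h | h <;> rcases hmy with h' | h'
            · exact absurd (h.trans h'.symm) hxy.ne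
            · rw [h, h']; exact Sym2.eq_swap
            · rw [h, h']
            · exact absurd (h.trans h'.symm) hxy.ne
          exact Or.inl ((hqe _).2 (Or.inr hxy'))
        · exact Or.inl ((hqe _).2 (Or.inl hje))
      · subst hj1; subst hj2
        have hne12 : j1 ≠ j2 := fun h => hxy.ne (by rw [h])
        rcases hcent2 j1 j2 hne12 with h | h | h
        · exact Or.inr h
        · exact Or.inl ((hqe _).2 (Or.inr (h.trans Sym2.eq_swap)))
        · exact absurd (hadjtrans _ _ _ _ hxy h).symm hn02
  -- Application 2'
  have h12of02 : G.Adj (c i) (c (i+2)) → G.Adj (c (i+1)) (c (i+2)) := by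
    intro h02
    by_contra hn12
    set q : G.Walk (c (i+1)) (c i) := Q1.append (Walk.cons h02.symm Walk.nil) with hq
    have hqs : ∀ x, x ∈ q.support ↔ x ∈ (P (i+1)).support ∨ x = c i := by
      intro x
      rw [hq, Walk.mem_support_append_iff, hQ1s]
      simp only [Walk.support_cons, Walk.support_nil, List.mem_cons,
        List.mem_singleton, List.not_mem_nil, or_false]
      constructor
      · rintro (h | h | h)
        · exact Or.inl h
        · exact Or.inl (by rw [h, ← hcz1]; exact (P (i+1)).end_mem_support)
        · exact Or.inr h
      · rintro (h | h)
        · exact Or.inl h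
        · exact Or.inr (Or.inr h)
    have hqe : ∀ e, e ∈ q.edges ↔ e ∈ (P (i+1)).edges ∨ e = s(c (i+2), c i) := by
      intro e
      rw [hq, Walk.edges_append, List.mem_append, hQ1e]
      simp [Walk.edges_cons]
    have hcinotin : c i ∉ (P (i+1)).support := by
      intro h
      rcases hcsup _ _ h with h' | h'
      · exact hz2 i h'
      · rw [hz4 i] at h'
        exact hz2' i h'
    have hdq : d ∉ q.support := by
      intro hds
      rcases (hqs d).1 hds with h | h
      · exact hd_int.2 (i+1) (Ne.symm (hz2 i)) h
      · exact hd_ne0 h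
    refine hBF (hasBuilding_of_apex q ?_ ?_ hdq hadj_d1 hadj_cid.symm hadj.symm ?_ ?_)
    · rw [Walk.isPath_def, hq, Walk.support_append, List.nodup_append]
      refine ⟨hQ1p.support_nodup, ?_, ?_⟩
      · simp [Walk.support_cons]
      · intro x hx1 y hx2 hxy
        subst hxy
        simp only [Walk.support_cons, Walk.support_nil, List.tail_cons, List.mem_singleton] at hx2
        rw [hQ1s] at hx1
        rw [hx2] at hx1
        exact hcinotin hx1
    · have l1 := hlenP (i+1)
      rw [hq, Walk.length_append, hQ1l]
      simp only [Walk.length_cons, Walk.length_nil]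
      omega
    · intro x hx hadjx
      rcases (hqs x).1 hx with h | h
      · exact (hdnb x ⟨_, h⟩ hadjx).symm
      · exact Or.inr h
    · intro x hx y hy hxy
      have hxs : ∃ a, x ∈ (P a).support := by
        rcases (hqs x).1 hx with h | h
        · exact ⟨_, h⟩
        · exact ⟨i, by rw [h]; exact (P i).start_mem_support⟩
      have hys : ∃ a, y ∈ (P a).support := by
        rcases (hqs y).1 hy with h | h
        · exact ⟨_, h⟩
        · exact ⟨i, by rw [h]; exact (P i).start_mem_support⟩
      rcases hind x y hxs hys hxy with ⟨j, hje⟩ | ⟨⟨j1, hj1⟩, ⟨j2, hj2⟩⟩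
      · rcases henum j i with rfl | rfl | rfl
        · exfalso
          have hdxy : x = d ∨ y = d := by
            rcases hPied _ hje with h | h <;> rw [Sym2.eq_iff] at h <;>
              rcases h with ⟨h1, h2⟩ | ⟨h1, h2⟩
            exacts [Or.inr h2, Or.inl h1, Or.inl h1, Or.inr h2]
          rcases hdxy with h | h
          · exact hdq (h ▸ hx)
          · exact hdq (h ▸ hy)
        · exact Or.inl ((hqe _).2 (Or.inl hje))
        · -- j = i+2 : both endpoints lie in {c (i+2), c i}
          have hmx : x = c i ∨ x = c (i+2) := by
            rcases (hqs x).1 hx with h | h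
            · refine Or.inr ?_
              have := hint1 (i+1) x h
                (by rw [hz4 i]; exact (P (i+2)).fst_mem_support_of_mem_edges hje)
              rwa [hcz1] at this
            · exact Or.inl h
          have hmy : y = c i ∨ y = c (i+2) := by
            rcases (hqs y).1 hy with h | h
            · refine Or.inr ?_
              have := hint1 (i+1) y h
                (by rw [hz4 i]; exact (P (i+2)).snd_mem_support_of_mem_edges hje)
              rwa [hcz1] at this
            · exact Or.inl h
          have hxy' : s(x, y) = s(c (i+2), c i) := by
            rcases hmx with h | h <;> rcases hmy with h' | h'
            · exact absurd (h.trans h'.symm) hxy.ne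
            · rw [h, h']; exact Sym2.eq_swap
            · rw [h, h']
            · exact absurd (h.trans h'.symm) hxy.ne
          exact Or.inl ((hqe _).2 (Or.inr hxy'))
      · subst hj1; subst hj2
        have hne12 : j1 ≠ j2 := fun h => hxy.ne (by rw [h])
        rcases hcent2 j1 j2 hne12 with h | h | h
        · exact Or.inr (h.trans Sym2.eq_swap)
        · exact absurd (hadjtrans _ _ _ _ hxy h) hn12
        · exact Or.inl ((hqe _).2 (Or.inr h))
  have h12 : G.Adj (c (i+1)) (c (i+2)) := hor.elim id h12of02
  have h02 : G.Adj (c i) (c (i+2)) := hor.elim h02of12 id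
  have hz9 : ∀ a b : ZMod 3, b = a + 1 → a = b + 1 → False := by decide
  have hcinotin : c i ∉ (P (i+1)).support := by
    intro h
    rcases hcsup _ _ h with h' | h'
    · exact hz2 i h'
    · rw [hz4 i] at h'
      exact hz2' i h'
  have hc1notin : c (i+1) ∉ (P (i+2)).support := by
    intro h
    rcases hcsup _ _ h with h' | h'
    · exact hz8 i h'
    · rw [hz1 i] at h'
      exact hz2 i h'.symm
  -- Application 3 : P (i+1) has length 2
  have hl1 : (P (i+1)).length = 2 := by
    by_contra hne2
    have hciq : c i ∉ Q1.support := by rw [hQ1s]; exact hcinotin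
    refine hBF (hasBuilding_of_apex Q1 hQ1p ?_ hciq hadj h02 h12 ?_ ?_)
    · rw [hQ1l]; have := hlenP (i+1); omega
    · intro x hx hadjx
      rw [hQ1s] at hx
      rcases hind (c i) x ⟨i, (P i).start_mem_support⟩ ⟨i+1, hx⟩ hadjx with
        ⟨j, hje⟩ | ⟨_, ⟨j2, hj2⟩⟩
      · have hcij : c i ∈ (P j).support := (P j).fst_mem_support_of_mem_edges hje
        rcases hcsup j i hcij with h | h
        · rw [← h] at hje
          exfalso
          rcases hPied _ hje with hh | hh <;> rw [Sym2.eq_iff] at hh <;>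
            rcases hh with ⟨h1, h2⟩ | ⟨h1, h2⟩
          · exact hd_int.2 (i+1) (Ne.symm (hz2 i)) (h2 ▸ hx)
          · exact hd_ne0 h1.symm
          · exact hd_ne0 h1.symm
          · exact hz2 i (hinj h1)
        · have hj : j = i + 2 := hz6 i j h
          rw [hj] at hje
          have hxj : x ∈ (P (i+2)).support := (P (i+2)).snd_mem_support_of_mem_edges hje
          right
          have := hint1 (i+1) x hx (by rw [hz4 i]; exact hxj)
          rwa [hcz1] at this
      · rw [hj2] at hx ⊢
        rcases hcsup (i+1) j2 hx with h | h
        · exact Or.inl (by rw [h])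
        · rw [hz4 i] at h
          exact Or.inr (by rw [h])
    · intro x hx y hy hxy
      rw [hQ1s] at hx hy
      rcases hind x y ⟨i+1, hx⟩ ⟨i+1, hy⟩ hxy with ⟨j, hje⟩ | ⟨⟨j1, hj1⟩, ⟨j2, hj2⟩⟩
      · by_cases hj : j = i + 1
        · left; rw [hQ1e]; exact hj ▸ hje
        · exfalso
          have hxj := (P j).fst_mem_support_of_mem_edges hje
          have hyj := (P j).snd_mem_support_of_mem_edges hje
          rcases hint (i+1) j (Ne.symm hj) x hx hxj with ⟨hb1, hxv⟩ | ⟨hb1, hxv⟩ <;>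
            rcases hint (i+1) j (Ne.symm hj) y hy hyj with ⟨hb2, hyv⟩ | ⟨hb2, hyv⟩
          · exact hxy.ne (hxv.trans hyv.symm)
          · exact hz9 _ _ hb1 hb2
          · exact hz9 _ _ hb2 hb1
          · exact hxy.ne (hxv.trans hyv.symm)
      · subst hj1; subst hj2
        have e1 := hcsup (i+1) j1 hx
        have e2 := hcsup (i+1) j2 hy
        rw [hz4 i] at e1 e2
        have hne12 : j1 ≠ j2 := fun h => hxy.ne (by rw [h])
        right
        rcases e1 with h1 | h1 <;> rcases e2 with h2 | h2
        · exact absurd (h1.trans h2.symm) hne12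
        · rw [h1, h2]
        · rw [h1, h2]; exact Sym2.eq_swap
        · exact absurd (h1.trans h2.symm) hne12
  -- Application 4 : P (i+2) has length 2
  have hl2 : (P (i+2)).length = 2 := by
    by_contra hne2
    have hciq : c (i+1) ∉ Q2.support := by rw [hQ2s]; exact hc1notin
    refine hBF (hasBuilding_of_apex Q2 hQ2p ?_ hciq h12 hadj.symm h02.symm ?_ ?_)
    · rw [hQ2l]; have := hlenP (i+2); omega
    · intro x hx hadjx
      rw [hQ2s] at hx
      rcases hind (c (i+1)) x ⟨i+1, (P (i+1)).start_mem_support⟩ ⟨i+2, hx⟩ hadjx with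
        ⟨j, hje⟩ | ⟨_, ⟨j2, hj2⟩⟩
      · have hcij : c (i+1) ∈ (P j).support := (P j).fst_mem_support_of_mem_edges hje
        rcases hcsup j (i+1) hcij with h | h
        · rw [← h] at hje
          have hxj : x ∈ (P (i+1)).support := (P (i+1)).snd_mem_support_of_mem_edges hje
          left
          have := hint1 (i+1) x hxj (by rw [hz4 i]; exact hx)
          rwa [hcz1] at this
        · have hj : j = i := by
            have h10 : ∀ a b : ZMod 3, a + 1 = b + 1 → b = a := by decide
            exact h10 i j h
          rw [hj] at hje
          exfalso
          rcases hPied _ hje with hh | hh <;> rw [Sym2.eq_iff] at hh <;>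
            rcases hh with ⟨h1, h2⟩ | ⟨h1, h2⟩
          · exact hz2 i (hinj h1).symm
          · exact hd_ne2 h1.symm
          · exact hd_ne2 h1.symm
          · exact hd_int.2 (i+2) (Ne.symm (hz2' i)) (h2 ▸ hx)
      · rw [hj2] at hx ⊢
        rcases hcsup (i+2) j2 hx with h | h
        · exact Or.inl (by rw [h])
        · rw [hz1 i] at h
          exact Or.inr (by rw [h])
    · intro x hx y hy hxy
      rw [hQ2s] at hx hy
      rcases hind x y ⟨i+2, hx⟩ ⟨i+2, hy⟩ hxy with ⟨j, hje⟩ | ⟨⟨j1, hj1⟩, ⟨j2, hj2⟩⟩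
      · by_cases hj : j = i + 2
        · left; rw [hQ2e]; exact hj ▸ hje
        · exfalso
          have hxj := (P j).fst_mem_support_of_mem_edges hje
          have hyj := (P j).snd_mem_support_of_mem_edges hje
          rcases hint (i+2) j (Ne.symm hj) x hx hxj with ⟨hb1, hxv⟩ | ⟨hb1, hxv⟩ <;>
            rcases hint (i+2) j (Ne.symm hj) y hy hyj with ⟨hb2, hyv⟩ | ⟨hb2, hyv⟩
          · exact hxy.ne (hxv.trans hyv.symm)
          · exact hz9 _ _ hb1 hb2
          · exact hz9 _ _ hb2 hb1
          · exact hxy.ne (hxv.trans hyv.symm)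
      · subst hj1; subst hj2
        have e1 := hcsup (i+2) j1 hx
        have e2 := hcsup (i+2) j2 hy
        rw [hz1 i] at e1 e2
        have hne12 : j1 ≠ j2 := fun h => hxy.ne (by rw [h])
        right
        rcases e1 with h1 | h1 <;> rcases e2 with h2 | h2
        · exact absurd (h1.trans h2.symm) hne12
        · rw [h1, h2]
        · rw [h1, h2]; exact Sym2.eq_swap
        · exact absurd (h1.trans h2.symm) hne12
  -- all petals have length 2 and all centers are pairwise adjacent
  have hlenall : ∀ j : ZMod 3, (P j).length = 2 := by
    intro j
    rcases henum j i with h | h | h <;> rw [h]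
    exacts [h2, hl1, hl2]
  have hadjall : ∀ u : ZMod 3, G.Adj (c u) (c (u+1)) := by
    intro u
    rcases henum u i with h | h | h <;> rw [h]
    · exact hadj
    · rw [hz4 i]; exact h12
    · rw [hz1 i]; exact h02.symm
  have hcc : ∀ a b : ZMod 3, a ≠ b → G.Adj (c a) (c b) := by
    intro a b hne
    obtain ⟨u, hu⟩ := hpairs a b hne
    rcases hu with ⟨h1, h2⟩ | ⟨h1, h2⟩
    · rw [h1, h2]; exact hadjall u
    · rw [h1, h2]; exact (hadjall u).symm
  -- the petal vertices
  set tt : ZMod 3 → V := fun j => (P j).getVert 1 with htt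
  have hgv0all : ∀ j, (P j).getVert 0 = c j := fun j => (P j).getVert_zero
  have hgv2all : ∀ j, (P j).getVert 2 = c (j+1) := by
    intro j; rw [← hlenall j]; exact (P j).getVert_length
  have htmem : ∀ j, tt j ∈ (P j).support := by
    intro j; exact getVert_mem_support' _ (by rw [hlenall j]; omega)
  have htne0 : ∀ j, tt j ≠ c j := by
    intro j h
    have := getVert_inj' (hpath j) 1 (by rw [hlenall j]; omega) 0 (by omega)
      (h.trans (hgv0all j).symm)
    omega
  have htne2 : ∀ j, tt j ≠ c (j+1) := by
    intro j h
    have := getVert_inj' (hpath j) 1 (by rw [hlenall j]; omega) 2 (le_of_eq (hlenall j).symm)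
      (h.trans (hgv2all j).symm)
    omega
  have ht_int : ∀ j, (∀ a, tt j ≠ c a) ∧ (∀ b, b ≠ j → tt j ∉ (P b).support) := by
    intro j; exact hnotc j (tt j) (htmem j) (htne0 j) (htne2 j)
  have hadj0 : ∀ j, G.Adj (c j) (tt j) := by
    intro j
    have := (P j).adj_getVert_succ (i := 0) (by rw [hlenall j]; omega)
    rwa [hgv0all j] at this
  have hadj1 : ∀ j, G.Adj (tt j) (c (j+1)) := by
    intro j
    have := (P j).adj_getVert_succ (i := 1) (by rw [hlenall j]; omega)
    rwa [hgv2all j] at this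
  have hedch : ∀ j, ∀ e ∈ (P j).edges, e = s(c j, tt j) ∨ e = s(tt j, c (j+1)) := by
    intro j e he
    obtain ⟨m, hm, hme⟩ := mem_edges_index he
    rw [hlenall j] at hm
    interval_cases m
    · rw [hgv0all j] at hme; exact Or.inl hme
    · rw [hgv2all j] at hme; exact Or.inr hme
  have hsupch : ∀ j x, x ∈ (P j).support ↔ (x = c j ∨ x = tt j ∨ x = c (j+1)) := by
    intro j x
    constructor
    · intro hx
      obtain ⟨n, hgv, hle⟩ := Walk.mem_support_iff_exists_getVert.1 hx
      rw [hlenall j] at hle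
      interval_cases n
      · exact Or.inl ((hgv0all j) ▸ hgv.symm)
      · exact Or.inr (Or.inl hgv.symm)
      · exact Or.inr (Or.inr ((hgv2all j) ▸ hgv.symm))
    · rintro (h | h | h) <;> rw [h]
      · exact (P j).start_mem_support
      · exact htmem j
      · exact (P j).end_mem_support
  -- adjacency characterizations
  have hct : ∀ a b : ZMod 3, G.Adj (c a) (tt b) ↔ (a = b ∨ a = b + 1) := by
    intro a b
    constructor
    · intro hadjx
      rcases hind (c a) (tt b) ⟨a, (P a).start_mem_support⟩ ⟨b, htmem b⟩ hadjx with
        ⟨j, hje⟩ | ⟨_, ⟨j2, hj2⟩⟩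
      · have htj : tt b ∈ (P j).support := (P j).snd_mem_support_of_mem_edges hje
        have hjb : j = b := by
          by_contra hcon
          exact (ht_int b).2 j hcon htj
        rw [hjb] at hje
        rcases hedch b _ hje with hh | hh <;> rw [Sym2.eq_iff] at hh <;>
          rcases hh with ⟨ha1, ha2⟩ | ⟨ha1, ha2⟩
        · exact Or.inl (hinj ha1)
        · exact absurd ha1.symm ((ht_int b).1 a)
        · exact absurd ha1.symm ((ht_int b).1 a)
        · exact Or.inr (hinj ha1)
      · exact absurd hj2 ((ht_int b).1 j2)
    · rintro (h | h) <;> rw [h]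
      · exact hadj0 b
      · exact (hadj1 b).symm
  have httn : ∀ a b : ZMod 3, ¬ G.Adj (tt a) (tt b) := by
    intro a b hadjx
    by_cases hab : a = b
    · rw [hab] at hadjx; exact hadjx.ne rfl
    rcases hind (tt a) (tt b) ⟨a, htmem a⟩ ⟨b, htmem b⟩ hadjx with
      ⟨j, hje⟩ | ⟨⟨j1, hj1⟩, _⟩
    · have h1 : tt a ∈ (P j).support := (P j).fst_mem_support_of_mem_edges hje
      have h2' : tt b ∈ (P j).support := (P j).snd_mem_support_of_mem_edges hje
      have hja : j = a := by
        by_contra hcon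
        exact (ht_int a).2 j hcon h1
      have hjb : j = b := by
        by_contra hcon
        exact (ht_int b).2 j hcon h2'
      exact hab (hja ▸ hjb)
    · exact absurd hj1 ((ht_int a).1 j1)
  -- the embedding
  have hsun : ∀ a b : ZMod 3,
      (sunGraph 3).Adj (Sum.inl a) (Sum.inl b) ↔ a ≠ b := by
    intro a b
    rw [sunGraph, SimpleGraph.fromRel_adj]
    simp
  have hsun2 : ∀ a b : ZMod 3,
      (sunGraph 3).Adj (Sum.inl a) (Sum.inr b) ↔ (a = b ∨ a = b + 1) := by
    intro a b
    rw [sunGraph, SimpleGraph.fromRel_adj]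
    simp
  have hsun3 : ∀ a b : ZMod 3,
      (sunGraph 3).Adj (Sum.inr a) (Sum.inl b) ↔ (b = a ∨ b = a + 1) := by
    intro a b
    rw [sunGraph, SimpleGraph.fromRel_adj]
    simp
  have hsun4 : ∀ a b : ZMod 3, ¬ (sunGraph 3).Adj (Sum.inr a) (Sum.inr b) := by
    intro a b h
    rw [sunGraph, SimpleGraph.fromRel_adj] at h
    simp at h
  refine ⟨⟨⟨Sum.elim c tt, ?_⟩, ?_⟩, ?_⟩
  · -- injectivity
    rintro (a | a) (b | b) h <;> simp only [Sum.elim_inl, Sum.elim_inr] at h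
    · exact congrArg Sum.inl (hinj h)
    · exact absurd h.symm ((ht_int b).1 a)
    · exact absurd h ((ht_int a).1 b)
    · by_cases hab : a = b
      · exact congrArg Sum.inr hab
      · exfalso
        exact (ht_int a).2 b (fun hc => hab hc.symm) (by rw [h]; exact htmem b)
  · -- map_rel_iff
    rintro (a | a) (b | b)
    · show G.Adj (c a) (c b) ↔ _
      rw [hsun a b]
      constructor
      · intro h hab
        exact h.ne (by rw [hab])
      · exact hcc a b
    · show G.Adj (c a) (tt b) ↔ _
      rw [hsun2 a b]
      exact hct a b
    · show G.Adj (tt a) (c b) ↔ _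
      rw [hsun3 a b]
      constructor
      · intro h
        exact (hct b a).1 h.symm
      · intro h
        exact ((hct b a).2 h).symm
    · show G.Adj (tt a) (tt b) ↔ _
      constructor
      · intro h
        exact absurd h (httn a b)
      · intro h
        exact absurd h (hsun4 a b)
  · -- range
    ext v
    simp only [Set.mem_range, Set.mem_setOf_eq]
    constructor
    · rintro ⟨x, rfl⟩
      rcases x with a | a
      · exact ⟨a, (P a).start_mem_support⟩
      · exact ⟨a, htmem a⟩
    · rintro ⟨a, ha⟩
      rcases (hsupch a v).1 ha with h | h | h
      · exact ⟨Sum.inl a, h.symm⟩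
      · exact ⟨Sum.inr a, h.symm⟩
      · exact ⟨Sum.inl (a+1), h.symm⟩
end

section
/- Let G be a strongly chordal graph with strong elimination ordering S = v_1, v_2, ..., v_n. Let G' be obtained from G by adding every edge v_i v_j (i < j) such that for some k with j < k, v_i v_k v_j is an induced path P_3 in G (v_i and v_j both adjacent to v_k, v_i v_j not an edge). Then G' is chordal and S is a perfect elimination ordering for G'. -/
open SimpleGraph

universe u

variable {V : Type u}

lemma mem_cN {G : SimpleGraph V} {s : Set V} {v u : V} :
    u ∈ cN G s v ↔ u ∈ s ∧ (u = v ∨ G.Adj v u) := Iff.rfl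

/-- if `G` is strongly chordal with strong elimination ordering given
by `f : V ↪ ℕ`, and `G'` is obtained by adding every edge `ij` (`f i < f j`) such
that `i, k, j` is a `P₃` for some `k` with `f j < f k`, then `G'` is chordal and
the same ordering is a perfect elimination ordering for `G'`. -/
theorem scc_chordal [Fintype V] (G : SimpleGraph V) (f : V ↪ ℕ)
    (hsimple : ∀ x : V, IsSimpleIn G {u | f x ≤ f u} x)
    (hstrong : ∀ i j k : V, f i < f j → f j < f k → G.Adj i j → G.Adj i k →
      cN G {u | f i ≤ f u} j ⊆ cN G {u | f i ≤ f u} k) :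
    ∀ G' : SimpleGraph V,
      G' = G ⊔ SimpleGraph.fromRel (fun i j => f i < f j ∧ ¬ G.Adj i j ∧
        ∃ k, f j < f k ∧ G.Adj i k ∧ G.Adj j k) →
      IsChordal G' ∧ ∀ x : V, G'.IsClique {u | f x < f u ∧ G'.Adj x u} := by
  intro G' hG'
  subst hG'
  set r : V → V → Prop := fun i j => f i < f j ∧ ¬ G.Adj i j ∧
        ∃ k, f j < f k ∧ G.Adj i k ∧ G.Adj j k with hr
  set Gp : SimpleGraph V := G ⊔ SimpleGraph.fromRel r with hGp
  have finj : Function.Injective f := f.injective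
  have real : ∀ a b : V, G.Adj a b → Gp.Adj a b := by
    intro a b h; rw [hGp, SimpleGraph.sup_adj]; exact Or.inl h
  -- common-witness helper
  have wit : ∀ u v w : V, u ≠ v → f u < f w → f v < f w →
      G.Adj u w → G.Adj v w → Gp.Adj u v := by
    intro u v w huv h1 h2 a1 a2
    by_cases hG : G.Adj u v
    · exact real u v hG
    · rw [hGp, SimpleGraph.sup_adj, SimpleGraph.fromRel_adj]
      rcases lt_or_gt_of_ne (fun h => huv (finj h)) with h | h
      · exact Or.inr ⟨huv, Or.inl ⟨h, hG, w, h2, a1, a2⟩⟩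
      · exact Or.inr ⟨huv, Or.inr ⟨h, fun h' => hG h'.symm, w, h1, a2, a1⟩⟩
  have norm : ∀ a b : V, f a < f b → Gp.Adj a b →
      G.Adj a b ∨ (¬ G.Adj a b ∧ ∃ k, f b < f k ∧ G.Adj a k ∧ G.Adj b k) := by
    intro a b hab h
    rw [hGp, SimpleGraph.sup_adj, SimpleGraph.fromRel_adj] at h
    rcases h with h | ⟨_, h | h⟩
    · exact Or.inl h
    · exact Or.inr ⟨h.2.1, h.2.2⟩
    · exact absurd hab (not_lt.mpr h.1.le)
  -- asymmetric key: x-u a real edge, x-v an added edge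
  have key2 : ∀ x u v : V, u ≠ v → f x < f u → f x < f v → G.Adj x u →
      (¬ G.Adj x v ∧ ∃ l, f v < f l ∧ G.Adj x l ∧ G.Adj v l) → Gp.Adj u v := by
    intro x u v huv hxu hxv axu ⟨hnv, l, hl1, hl2, hl3⟩
    by_cases hul : u = l
    · subst hul; exact (real v u hl3).symm
    rcases lt_trichotomy (f u) (f l) with h | h | h
    · rcases hsimple x u hxu.le l (hxv.trans hl1).le axu hl2 with hsub | hsub
      · have hu : u ∈ cN G {w | f x ≤ f w} u := ⟨hxu.le, Or.inl rfl⟩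
        rcases (hsub hu).2 with h' | h'
        · exact absurd h' hul
        · exact wit u v l huv h hl1 h'.symm hl3
      · have hv : v ∈ cN G {w | f x ≤ f w} l := ⟨hxv.le, Or.inr hl3.symm⟩
        rcases (hsub hv).2 with h' | h'
        · exact absurd h'.symm huv
        · exact (real u v h').symm.symm
    · exact absurd (finj h) hul
    · have hsub := hstrong x l u (hxv.trans hl1) h hl2 axu
      have hv : v ∈ cN G {w | f x ≤ f w} l := ⟨hxv.le, Or.inr hl3.symm⟩
      rcases (hsub hv).2 with h' | h'
      · exact absurd h'.symm huv
      · exact real u v h'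
  have key : ∀ x u v : V, u ≠ v → f x < f u → f x < f v →
      Gp.Adj x u → Gp.Adj x v → Gp.Adj u v := by
    intro x u v huv hxu hxv hau hav
    rcases norm x u hxu hau with au | ⟨hnu, k, hk1, hk2, hk3⟩
    · rcases norm x v hxv hav with av | hv
      · -- both real edges
        rcases lt_trichotomy (f u) (f v) with h | h | h
        · have hsub := hstrong x u v hxu h au av
          have hu : u ∈ cN G {w | f x ≤ f w} u := ⟨hxu.le, Or.inl rfl⟩
          rcases (hsub hu).2 with h' | h'
          · exact absurd h' huv
          · exact real u v h'.symm
        · exact absurd (finj h) huv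
        · have hsub := hstrong x v u hxv h av au
          have hv' : v ∈ cN G {w | f x ≤ f w} v := ⟨hxv.le, Or.inl rfl⟩
          rcases (hsub hv').2 with h' | h'
          · exact absurd h'.symm huv
          · exact real u v h'
      · exact key2 x u v huv hxu hxv au hv
    · rcases norm x v hxv hav with av | ⟨hnv, l, hl1, hl2, hl3⟩
      · exact (key2 x v u huv.symm hxv hxu av ⟨hnu, k, hk1, hk2, hk3⟩).symm
      · -- both added edges, witnesses k and l
        by_cases hkl : k = l
        · subst hkl; exact wit u v k huv hk1 hl1 hk3 hl3
        rcases lt_trichotomy (f k) (f l) with h | h | h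
        · have hsub := hstrong x k l (hxu.trans hk1) h hk2 hl2
          have hu : u ∈ cN G {w | f x ≤ f w} k := ⟨hxu.le, Or.inr hk3.symm⟩
          rcases (hsub hu).2 with h' | h'
          · exact absurd (h' ▸ hl2) hnu
          · exact wit u v l huv (hk1.trans h) hl1 h'.symm hl3
        · exact absurd (finj h) hkl
        · have hsub := hstrong x l k (hxv.trans hl1) h hl2 hk2
          have hv : v ∈ cN G {w | f x ≤ f w} l := ⟨hxv.le, Or.inr hl3.symm⟩
          rcases (hsub hv).2 with h' | h'
          · exact absurd (h' ▸ hk2) hnv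
          · exact wit u v k huv hk1 (hl1.trans h) hk3 h'.symm
  have hclique : ∀ x : V, Gp.IsClique {u | f x < f u ∧ Gp.Adj x u} := by
    intro x u hu v hv huv
    exact key x u v huv hu.1 hv.1 hu.2 hv.2
  refine ⟨?_, hclique⟩
  intro k hk
  constructor
  intro e
  have hkz : NeZero k := ⟨by omega⟩
  have hO : ∀ c : ℕ, 0 < c → c < k → ((c : ZMod k) ≠ 0) := by
    intro c hc1 hc2 h
    have hd := (ZMod.natCast_eq_zero_iff c k).mp h
    have := Nat.le_of_dvd hc1 hd
    omega
  obtain ⟨i, -, hmin⟩ := Finset.exists_min_image Finset.univ (fun i => f (e i))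
    ⟨0, Finset.mem_univ 0⟩
  have h1 : i ≠ i + 1 := by
    intro h
    exact hO 1 one_pos (by omega) (by exact_mod_cast (by linear_combination -h : (1 : ZMod k) = 0))
  have h2 : i ≠ i - 1 := by
    intro h
    exact hO 1 one_pos (by omega) (by exact_mod_cast (by linear_combination h : (1 : ZMod k) = 0))
  have h3 : i - 1 ≠ i + 1 := by
    intro h
    exact hO 2 two_pos (by omega) (by exact_mod_cast (by linear_combination -h : (2 : ZMod k) = 0))
  have ca1 : (cyc k).Adj i (i + 1) := by
    rw [cyc, SimpleGraph.fromRel_adj]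
    exact ⟨h1, Or.inl rfl⟩
  have ca2 : (cyc k).Adj i (i - 1) := by
    rw [cyc, SimpleGraph.fromRel_adj]
    exact ⟨h2, Or.inr (by ring)⟩
  have einj : Function.Injective e := e.injective
  have hlt : ∀ j : ZMod k, i ≠ j → f (e i) < f (e j) := by
    intro j hij
    have hle := hmin j (Finset.mem_univ j)
    have hne : f (e i) ≠ f (e j) := fun h => hij (einj (finj h))
    omega
  have hadj := hclique (e i) ⟨hlt _ h2, e.map_rel_iff.mpr ca2⟩
    ⟨hlt _ h1, e.map_rel_iff.mpr ca1⟩ (fun h => h3 (einj h))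
  have hc : (cyc k).Adj (i - 1) (i + 1) := e.map_rel_iff.mp hadj
  rw [cyc, SimpleGraph.fromRel_adj] at hc
  rcases hc.2 with h | h
  · exact hO 1 one_pos (by omega) (by exact_mod_cast (by linear_combination h : (1 : ZMod k) = 0))
  · exact hO 3 three_pos (by omega) (by exact_mod_cast (by linear_combination -h : (3 : ZMod k) = 0))
end

section
/- If a graph G contains a near building as an induced subgraph, then G contains an induced building or an induced gem. Equivalently, a (building, gem)-free graph contains no induced near building. -/
open SimpleGraph

universe u

variable {V : Type u}

/-- `G` contains a near building as an induced subgraph: vertices `v, w 0, ..., w (j-1)`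
(`j ≥ 4`, all distinct), with edges `v-(w 0)`, `v-(w (j-1))`, `(w 0)-(w (j-1))`, the
path edges `(w i)-(w (i+1))`, and possibly extra edges only of the form
`(w (j-1))-(w a)` with `1 ≤ a ≤ j-3`, and no other edges. -/
def HasNearBuilding (G : SimpleGraph V) : Prop :=
  ∃ (j : ℕ) (v : V) (w : ℕ → V), 4 ≤ j ∧
    (∀ a b, a < j → b < j → w a = w b → a = b) ∧
    (∀ a, a < j → v ≠ w a) ∧
    G.Adj v (w 0) ∧ G.Adj v (w (j - 1)) ∧ G.Adj (w 0) (w (j - 1)) ∧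
    (∀ a, 0 < a → a < j - 1 → ¬ G.Adj v (w a)) ∧
    (∀ a, a + 1 < j → G.Adj (w a) (w (a + 1))) ∧
    (∀ a b, a < b → b < j → G.Adj (w a) (w b) →
      b = a + 1 ∨ (a = 0 ∧ b = j - 1) ∨ (b = j - 1 ∧ 1 ≤ a ∧ a ≤ j - 3))
/-! ### Auxiliary lemmas -/

private lemma zmod_eq_iff_val' {k : ℕ} [NeZero k] (i j : ZMod k) : i = j ↔ i.val = j.val :=
  ⟨fun h => h ▸ rfl, fun h => ZMod.val_injective k h⟩

private lemma exists_min' {P : ℕ → Prop} (h : ∃ a, P a) :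
    ∃ a, P a ∧ ∀ b, b < a → ¬ P b := by
  classical
  exact ⟨Nat.find h, Nat.find_spec h, fun b hb => Nat.find_min h hb⟩

private lemma building_of_fn (G : SimpleGraph V) (k : ℕ) (hk : 5 ≤ k) (f : ℕ → V)
    (hinj : ∀ a b, a < k → b < k → f a = f b → a = b)
    (hadj : ∀ a, a + 1 < k → G.Adj (f a) (f (a + 1)))
    (hlast : G.Adj (f (k - 1)) (f 0))
    (hchord : G.Adj (f 0) (f 2))
    (honly : ∀ a b, a < b → b < k → G.Adj (f a) (f b) →
      b = a + 1 ∨ (a = 0 ∧ b = k - 1) ∨ (a = 0 ∧ b = 2)) :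
    HasBuilding G := by
  haveI : NeZero k := ⟨by omega⟩
  have hsucc : ∀ x : ZMod k, (x + 1).val = (x.val + 1) % k := by
    haveI : Fact (1 < k) := ⟨by omega⟩
    intro x
    rw [ZMod.val_add, ZMod.val_one]
  have hval2 : (2 : ZMod k).val = 2 := by
    have : ((2:ℕ) : ZMod k).val = 2 := ZMod.val_cast_of_lt (by omega)
    simpa using this
  refine ⟨k, hk, ⟨⟨⟨fun i => f i.val, ?_⟩, ?_⟩⟩⟩
  · intro i j h
    exact ZMod.val_injective k (hinj _ _ (ZMod.val_lt i) (ZMod.val_lt j) h)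
  · intro i j
    simp only [Function.Embedding.coeFn_mk, buildingGraph, fromRel_adj]
    constructor
    · intro hGadj
      have hne : i ≠ j := by rintro rfl; exact G.loopless.irrefl _ hGadj
      refine ⟨hne, ?_⟩
      have hiv := ZMod.val_lt i
      have hjv := ZMod.val_lt j
      have hvne : i.val ≠ j.val := fun h => hne (ZMod.val_injective k h)
      rcases Nat.lt_or_ge i.val j.val with hlt | hge
      · rcases honly _ _ hlt hjv hGadj with h1 | ⟨h1, h2⟩ | ⟨h1, h2⟩
        · left; left
          rw [zmod_eq_iff_val', hsucc, h1]; exact (Nat.mod_eq_of_lt (by omega)).symm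
        · right; left
          rw [zmod_eq_iff_val', hsucc, h2, h1, Nat.sub_add_cancel (by omega), Nat.mod_self]
        · left; right
          constructor
          · rw [zmod_eq_iff_val', ZMod.val_zero, h1]
          · rw [zmod_eq_iff_val', hval2, h2]
      · have hlt : j.val < i.val := by omega
        rcases honly _ _ hlt hiv (hGadj.symm) with h1 | ⟨h1, h2⟩ | ⟨h1, h2⟩
        · right; left
          rw [zmod_eq_iff_val', hsucc, h1]; exact (Nat.mod_eq_of_lt (by omega)).symm
        · left; left
          rw [zmod_eq_iff_val', hsucc, h2, h1, Nat.sub_add_cancel (by omega), Nat.mod_self]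
        · right; right
          constructor
          · rw [zmod_eq_iff_val', ZMod.val_zero, h1]
          · rw [zmod_eq_iff_val', hval2, h2]
    · rintro ⟨hne, (h | ⟨h0, h2⟩) | (h | ⟨h0, h2⟩)⟩
      · subst h
        show G.Adj (f _) (f _)
        have hs := hsucc i
        rcases Nat.lt_or_ge (i.val + 1) k with hlt | hge
        · have hv : (i + 1).val = i.val + 1 := by rw [hs, Nat.mod_eq_of_lt hlt]
          rw [hv]; exact hadj _ (by omega)
        · have hik := ZMod.val_lt i
          have hieq : i.val = k - 1 := by omega
          have hv : (i + 1).val = 0 := by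
            rw [hs, hieq, Nat.sub_add_cancel (by omega), Nat.mod_self]
          rw [hv, hieq]; exact hlast
      · subst h0; subst h2
        show G.Adj (f _) (f _)
        rw [ZMod.val_zero, hval2]; exact hchord
      · subst h
        show G.Adj (f _) (f _)
        have hs := hsucc j
        rcases Nat.lt_or_ge (j.val + 1) k with hlt | hge
        · have hv : (j + 1).val = j.val + 1 := by rw [hs, Nat.mod_eq_of_lt hlt]
          rw [hv]; exact (hadj _ (by omega)).symm
        · have hjk := ZMod.val_lt j
          have hjeq : j.val = k - 1 := by omega
          have hv : (j + 1).val = 0 := by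
            rw [hs, hjeq, Nat.sub_add_cancel (by omega), Nat.mod_self]
          rw [hv, hjeq]; exact hlast.symm
      · subst h0; subst h2
        show G.Adj (f _) (f _)
        rw [ZMod.val_zero, hval2]; exact hchord.symm

private lemma gem_of (G : SimpleGraph V) (a b c d e : V)
    (hab : G.Adj a b) (hbc : G.Adj b c) (hcd : G.Adj c d)
    (hea : G.Adj e a) (heb : G.Adj e b) (hec : G.Adj e c) (hed : G.Adj e d)
    (hac : ¬ G.Adj a c) (had : ¬ G.Adj a d) (hbd : ¬ G.Adj b d)
    (hac' : a ≠ c) (had' : a ≠ d) (hbd' : b ≠ d) :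
    Nonempty (gemGraph ↪g G) := by
  have hinj : Function.Injective ![a, b, c, d, e] := by
    intro i j h
    fin_cases i <;> fin_cases j <;> simp_all <;>
      first
        | rfl
        | (exfalso; first
            | exact G.loopless.irrefl _ (h ▸ hab)
            | exact G.loopless.irrefl _ (h ▸ hbc)
            | exact G.loopless.irrefl _ (h ▸ hcd)
            | exact G.loopless.irrefl _ (h ▸ hea)
            | exact G.loopless.irrefl _ (h ▸ heb)
            | exact G.loopless.irrefl _ (h ▸ hec)
            | exact G.loopless.irrefl _ (h ▸ hed)
            | exact G.loopless.irrefl _ (h.symm ▸ hab)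
            | exact G.loopless.irrefl _ (h.symm ▸ hbc)
            | exact G.loopless.irrefl _ (h.symm ▸ hcd)
            | exact G.loopless.irrefl _ (h.symm ▸ hea)
            | exact G.loopless.irrefl _ (h.symm ▸ heb)
            | exact G.loopless.irrefl _ (h.symm ▸ hec)
            | exact G.loopless.irrefl _ (h.symm ▸ hed)
            | exact hac' h | exact had' h | exact hbd' h
            | exact hac' h.symm | exact had' h.symm | exact hbd' h.symm)
  have hca : ¬ G.Adj c a := fun h => hac h.symm
  have hda : ¬ G.Adj d a := fun h => had h.symm
  have hdb : ¬ G.Adj d b := fun h => hbd h.symm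
  refine ⟨⟨⟨![a, b, c, d, e], hinj⟩, ?_⟩⟩
  intro i j
  fin_cases i <;> fin_cases j <;>
    simp [gemGraph, hab, hbc, hcd, hea, heb, hec, hed, hac, had, hbd,
      hab.symm, hbc.symm, hcd.symm, hea.symm, heb.symm, hec.symm, hed.symm,
      hca, hda, hdb, G.loopless.irrefl _] <;>
    first
      | exact G.loopless.irrefl _
      | decide

/-- a graph containing an induced near building contains an induced
building or an induced gem; equivalently, a (building, gem)-free graph contains
no induced near building. -/
theorem near_building (G : SimpleGraph V) (h : HasNearBuilding G) :
    HasBuilding G ∨ Nonempty (gemGraph ↪g G) := by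
  obtain ⟨j, v, w, hj4, winj, vne, hv0, hvlast, h0last, hvnon, hpath, honly⟩ := h
  -- the least index `a` in `[1, j-2]` with `w a` adjacent to `w (j-1)`
  have hex : ∃ a, 1 ≤ a ∧ a ≤ j - 2 ∧ G.Adj (w a) (w (j - 1)) := by
    refine ⟨j - 2, by omega, le_refl _, ?_⟩
    have h := hpath (j - 2) (by omega)
    have e : j - 2 + 1 = j - 1 := by omega
    rwa [e] at h
  obtain ⟨a₀, ⟨ha01, ha02, ha0adj⟩, hmin⟩ := exists_min' hex
  rcases Nat.lt_or_ge a₀ 2 with ha0lt | ha0ge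
  · -- a₀ = 1 : chord at w 1
    have e : a₀ = 1 := by omega
    subst e
    by_cases h2 : G.Adj (w 2) (w (j - 1))
    · -- gem on v, w 0, w 1, w 2, w (j-1)
      refine Or.inr (gem_of G v (w 0) (w 1) (w 2) (w (j - 1))
        hv0 (hpath 0 (by omega)) (hpath 1 (by omega))
        hvlast.symm h0last.symm ha0adj.symm h2.symm
        (hvnon 1 (by omega) (by omega)) (hvnon 2 (by omega) (by omega))
        (fun hadj => by have := honly 0 2 (by omega) (by omega) hadj; omega)
        (vne 1 (by omega)) (vne 2 (by omega))
        (fun hw => by have := winj 0 2 (by omega) (by omega) hw; omega))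
    · -- no edge w 2 - w (j-1) : then j ≥ 5 and we find a building
      have hj5 : 5 ≤ j := by
        rcases Nat.lt_or_ge j 5 with hlt | hge
        · exfalso
          have h3 := hpath 2 (by omega)
          have e : 2 + 1 = j - 1 := by omega
          rw [e] at h3
          exact h2 h3
        · exact hge
      have hex1 : ∃ a, 2 ≤ a ∧ a ≤ j - 2 ∧ G.Adj (w a) (w (j - 1)) := by
        refine ⟨j - 2, by omega, le_refl _, ?_⟩
        have h := hpath (j - 2) (by omega)
        have e : j - 2 + 1 = j - 1 := by omega
        rwa [e] at h
      obtain ⟨a₁, ⟨ha11, ha12, ha1adj⟩, hmin1⟩ := exists_min' hex1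
      have ha13 : 3 ≤ a₁ := by
        have : a₁ ≠ 2 := fun e => h2 (e ▸ ha1adj)
        omega
      refine Or.inl (building_of_fn G (a₁ + 2) (by omega)
        (fun i => match i with
          | 0 => w 1 | 1 => w 0 | 2 => w (j - 1) | (n+3) => w (a₁ - n))
        ?_ ?_ ?_ ?_ ?_)
      · -- injectivity
        intro a b ha hb hfab
        rcases a with _ | _ | _ | a <;> rcases b with _ | _ | _ | b <;>
          first
            | rfl
            | (have := winj _ _ (by omega) (by omega) hfab; omega)
            | (have := winj _ _ (by omega) (by omega) hfab.symm; omega)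
      · -- consecutive edges
        intro a ha
        rcases a with _ | _ | _ | a
        · exact (hpath 0 (by omega)).symm
        · exact h0last
        · show G.Adj (w (j - 1)) (w (a₁ - 0))
          simpa using ha1adj.symm
        · show G.Adj (w (a₁ - a)) (w (a₁ - (a + 1)))
          have e : a₁ - (a + 1) + 1 = a₁ - a := by omega
          have h := hpath (a₁ - (a + 1)) (by omega)
          rw [e] at h
          exact h.symm
      · -- wrap-around edge
        have e : a₁ + 2 - 1 = (a₁ - 2) + 3 := by omega
        rw [e]
        show G.Adj (w (a₁ - (a₁ - 2))) (w 1)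
        have e2 : a₁ - (a₁ - 2) = 2 := by omega
        rw [e2]
        exact (hpath 1 (by omega)).symm
      · -- chord
        exact ha0adj
      · -- induced : no other edges
        intro a b hab hbk hadj
        rcases a with _ | _ | _ | a <;> rcases b with _ | _ | _ | b <;>
          first
            | omega
            | (exact absurd hadj (G.loopless.irrefl _))
            | (have := honly 1 _ (by omega) (by omega) hadj; omega)
            | (have := honly 0 _ (by omega) (by omega) hadj; omega)
            | (have := honly _ _ (by omega) (by omega) hadj.symm; omega)
            | (rcases b with _ | b <;>
                first
                  | omega
                  | exact (hmin1 (a₁ - (b + 1)) (by omega)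
                      ⟨by omega, by omega, hadj.symm⟩).elim)
  · -- a₀ ≥ 2 : building on v, w 0 .. w a₀, w (j-1)
    refine Or.inl (building_of_fn G (a₀ + 3) (by omega)
      (fun i => match i with
        | 0 => w 0 | 1 => v | 2 => w (j - 1) | (n+3) => w (a₀ - n))
      ?_ ?_ ?_ ?_ ?_)
    · intro a b ha hb hfab
      rcases a with _ | _ | _ | a <;> rcases b with _ | _ | _ | b <;>
        first
          | rfl
          | (exact ((vne _ (by omega)) hfab).elim)
          | (exact ((vne _ (by omega)) hfab.symm).elim)
          | (have := winj _ _ (by omega) (by omega) hfab; omega)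
          | (have := winj _ _ (by omega) (by omega) hfab.symm; omega)
    · intro a ha
      rcases a with _ | _ | _ | a
      · exact hv0.symm
      · exact hvlast
      · show G.Adj (w (j - 1)) (w (a₀ - 0))
        simpa using ha0adj.symm
      · show G.Adj (w (a₀ - a)) (w (a₀ - (a + 1)))
        have e : a₀ - (a + 1) + 1 = a₀ - a := by omega
        have h := hpath (a₀ - (a + 1)) (by omega)
        rw [e] at h
        exact h.symm
    · have e : a₀ + 3 - 1 = (a₀ - 1) + 3 := by omega
      rw [e]
      show G.Adj (w (a₀ - (a₀ - 1))) (w 0)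
      have e2 : a₀ - (a₀ - 1) = 1 := by omega
      rw [e2]
      exact (hpath 0 (by omega)).symm
    · exact h0last
    · intro a b hab hbk hadj
      rcases a with _ | _ | _ | a <;> rcases b with _ | _ | _ | b <;>
        first
          | omega
          | (exact absurd hadj (G.loopless.irrefl _))
          | (exact (hvnon _ (by omega) (by omega) hadj).elim)
          | (exact (hvnon _ (by omega) (by omega) hadj.symm).elim)
          | (have := honly 0 _ (by omega) (by omega) hadj; omega)
          | (have := honly _ _ (by omega) (by omega) hadj.symm; omega)
          | (rcases b with _ | b <;>
              first
                | omega
                | exact (hmin (a₀ - (b + 1)) (by omega)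
                    ⟨by omega, by omega, hadj.symm⟩).elim)
end

section
/- LBFS property: If σ = v_1 ... v_n is a lexicographic breadth-first search ordering of a graph G, and a, b, c are vertices with a < b < c in σ, ac ∈ E(G), and bc ∉ E(G), then there exists a vertex d with c < d in σ such that bd ∈ E(G) and ad ∉ E(G). -/
open SimpleGraph

universe u

variable {V : Type u}

/-- The label of the vertex numbered `k` at the moment number `i` is assigned:
the set of numbers `m > i` of already-numbered neighbours of `σ k`. -/
def lbfsLabel (G : SimpleGraph V) {n : ℕ} (σ : Fin n ≃ V) (i k : Fin n) : Set (Fin n) :=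
  {m | i < m ∧ G.Adj (σ m) (σ k)}

/-- `σ` is an LBFS ordering of `G`: when number `i` is assigned, the chosen vertex
`σ i` has a lexicographically largest label (labels are decreasing sequences of
numbers, compared lexicographically from the largest number down) among all
still-unnumbered vertices `σ k`, `k < i`. -/
def IsLBFSOrder (G : SimpleGraph V) {n : ℕ} (σ : Fin n ≃ V) : Prop :=
  ∀ i k : Fin n, k < i →
    lbfsLabel G σ i k = lbfsLabel G σ i i ∨
    ∃ m, m ∈ lbfsLabel G σ i i ∧ m ∉ lbfsLabel G σ i k ∧
      ∀ m', m < m' → (m' ∈ lbfsLabel G σ i i ↔ m' ∈ lbfsLabel G σ i k)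

/-- the fundamental property of LBFS orderings. -/
theorem lbfs_property (G : SimpleGraph V) {n : ℕ} (σ : Fin n ≃ V)
    (hσ : IsLBFSOrder G σ) (a b c : Fin n) (hab : a < b) (hbc : b < c)
    (hac : G.Adj (σ a) (σ c)) (hbcE : ¬ G.Adj (σ b) (σ c)) :
    ∃ d : Fin n, c < d ∧ G.Adj (σ b) (σ d) ∧ ¬ G.Adj (σ a) (σ d) := by
  
  rcases hσ b a hab with heq | ⟨m, hmB, hmA, hhi⟩
  · exfalso
    have hcA : c ∈ lbfsLabel G σ b a := ⟨hbc, hac.symm⟩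
    rw [heq] at hcA
    exact hbcE hcA.2.symm
  · have hcm : c < m := by
      rcases lt_trichotomy c m with h | h | h
      · exact h
      · exact (hbcE (h ▸ hmB).2.symm).elim
      · have := (hhi c h).mpr ⟨hbc, hac.symm⟩
        exact (hbcE this.2.symm).elim
    refine ⟨m, hcm, hmB.2.symm, fun hadj => ?_⟩
    exact hmA ⟨hmB.1, hadj.symm⟩
end

section
/- In the square of the 9-cycle, (C_9)^2, every vertex is the nose of some induced bull. -/
open SimpleGraph

universe u

variable {V : Type u}

/-- The square of the 9-cycle: `i ~ j` iff their cyclic distance is 1 or 2. -/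
def c9sq : SimpleGraph (ZMod 9) :=
  SimpleGraph.fromRel (fun i j => j = i + 1 ∨ j = i + 2)

lemma c9sq_shift (v a b : ZMod 9) : c9sq.Adj (a + v) (b + v) ↔ c9sq.Adj a b := by
  simp only [c9sq, SimpleGraph.fromRel_adj, ne_eq, add_left_inj,
    add_right_comm _ v]

/-- in `(C₉)²` every vertex is the nose of some induced bull. -/
theorem c9sq_every_vertex_nose (v : ZMod 9) :
    ∃ f : bullGraph ↪g c9sq, f 4 = v := by
  refine ⟨⟨⟨fun i => ![3, 1, 8, 6, 0] i + v, ?_⟩, ?_⟩, ?_⟩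
  · intro a b h
    have h2 : (![3, 1, 8, 6, 0] : Fin 5 → ZMod 9) a = ![3, 1, 8, 6, 0] b :=
      add_right_cancel h
    fin_cases a <;> fin_cases b <;> simp_all <;> exact absurd h (by decide)
  · intro a b
    show c9sq.Adj ((![3, 1, 8, 6, 0] : Fin 5 → ZMod 9) a + v) (![3, 1, 8, 6, 0] b + v) ↔ bullGraph.Adj a b
    rw [c9sq_shift]
    fin_cases a <;> fin_cases b <;> simp [c9sq, bullGraph] <;> decide
  · show (![3, 1, 8, 6, 0] : Fin 5 → ZMod 9) 4 + v = v
    simp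
end

section
/- Every (building, gem)-free graph is (building, sun)-free; i.e., a graph with no induced building and no induced gem contains no induced sun. -/
open SimpleGraph

universe u

variable {V : Type u}

/-- every (building, gem)-free graph is (building, sun)-free. -/
theorem building_gem_free_sun_free (G : SimpleGraph V)
    (hBF : BuildingFree G) (hgem : IsEmpty (gemGraph ↪g G)) :
    ¬ HasSun G := by
  rintro ⟨k, hk, ⟨e⟩⟩
  have hne : ∀ a b : ℕ, a < k → b < k → a ≠ b → ((a : ZMod k) ≠ (b : ZMod k)) := by
    intro a b ha hb hab h
    rw [ZMod.natCast_eq_natCast_iff] at h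
    have := Nat.ModEq.eq_of_lt_of_lt h ha hb
    exact hab this
  have h01 : (0 : ZMod k) ≠ 1 := by
    have := hne 0 1 (by omega) (by omega) (by omega); simpa using this
  have h02 : (0 : ZMod k) ≠ 2 := by
    have := hne 0 2 (by omega) (by omega) (by omega); simpa using this
  have h12 : (1 : ZMod k) ≠ 2 := by
    have := hne 1 2 (by omega) (by omega) (by omega); simpa using this
  let f : Fin 5 → ZMod k ⊕ ZMod k :=
    ![Sum.inr 0, Sum.inl 0, Sum.inl 2, Sum.inr 1, Sum.inl 1]
  have hemb : gemGraph ↪g sunGraph k := by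
    refine ⟨⟨f, ?_⟩, ?_⟩
    · intro a b hab
      fin_cases a <;> fin_cases b <;>
        simp_all [f, h01, h02, h12, h01.symm, h02.symm, h12.symm]
    · intro a b
      show (sunGraph k).Adj (f a) (f b) ↔ gemGraph.Adj a b
      simp only [f]
      fin_cases a <;> fin_cases b <;>
        simp [f, gemGraph, sunGraph, SimpleGraph.fromRel_adj, h01, h02, h12,
          h01.symm, h02.symm, h12.symm, one_add_one_eq_two, zero_add,
          ] <;> decide
  exact hgem.false (e.comp hemb)
end
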